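/- arXiv:1104.2542 — 7 statements merged into one kernel-verified Lean document; each statement's English description precedes it below -/
import Mathlib

section
/- For every positive integer n, 1/γ(n) = Σ_{rs = n} μ²(s) ν(s), where ν(s) := ∏_{p | s} (1 - h(p))/(p - 1) and γ(n) := ∏_{p | n} (1 - 1/p)/(1 - h(p)/p). -/
open Finset

/-- With `γ(n) = ∏_{p ∣ n} (1 - 1/p)/(1 - h(p)/p)` and
`ν(s) = ∏_{p ∣ s} (1 - h(p))/(p - 1)`, one has
`1/γ(n) = ∑_{s ∣ n} μ²(s) ν(s)` for every positive integer `n`. -/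
theorem stmt7 (h : ℕ → ℝ) (hp : ∀ p : ℕ, p.Prime → h p < p) (n : ℕ) (hn : 0 < n) :
    (∏ p ∈ n.primeFactors, (1 - 1 / (p : ℝ)) / (1 - h p / p))⁻¹ =
      ∑ s ∈ n.divisors, ((ArithmeticFunction.moebius s : ℝ)) ^ 2 *
        ∏ p ∈ s.primeFactors, (1 - h p) / ((p : ℝ) - 1) := by
  have key : ∀ p ∈ n.primeFactors, ((1 - 1 / (p : ℝ)) / (1 - h p / p))⁻¹
      = 1 + (1 - h p) / ((p : ℝ) - 1) := by
    intro p hpmem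
    have hpr := Nat.prime_of_mem_primeFactors hpmem
    have hp2 : (2 : ℝ) ≤ p := by exact_mod_cast hpr.two_le
    have hppos : (0 : ℝ) < p := by linarith
    have hlt := hp p hpr
    have h1 : (p:ℝ) - 1 ≠ 0 := by linarith
    have h2 : 1 - h p / (p:ℝ) ≠ 0 := by
      have : h p / (p:ℝ) < 1 := (div_lt_one hppos).2 hlt
      linarith
    have h3 : 1 - 1 / (p:ℝ) ≠ 0 := by
      have : 1 / (p:ℝ) < 1 := by rw [div_lt_one hppos]; linarith
      linarith
    rw [inv_div]
    field_simp
    ring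
  rw [← Finset.prod_inv_distrib, Finset.prod_congr rfl key]
  -- RHS: restrict to squarefree divisors
  have hrhs : ∑ s ∈ n.divisors, ((ArithmeticFunction.moebius s : ℝ)) ^ 2 *
        ∏ p ∈ s.primeFactors, (1 - h p) / ((p : ℝ) - 1)
      = ∑ s ∈ n.divisors.filter Squarefree,
        ∏ p ∈ s.primeFactors, (1 - h p) / ((p : ℝ) - 1) := by
    rw [Finset.sum_filter]
    refine Finset.sum_congr rfl fun s hs => ?_
    by_cases hsq : Squarefree s
    · rw [ArithmeticFunction.moebius_apply_of_squarefree hsq]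
      push_cast
      rw [if_pos hsq, ← pow_mul, mul_comm (ArithmeticFunction.cardFactors s) 2,
        pow_mul, neg_one_sq, one_pow, one_mul]
    · simp [hsq, ArithmeticFunction.moebius_eq_zero_of_not_squarefree hsq]
  rw [hrhs, Nat.sum_divisors_filter_squarefree hn.ne']
  have hfac : (UniqueFactorizationMonoid.normalizedFactors n).toFinset = n.primeFactors := by
    rw [Nat.factors_eq, List.toFinset_coe, Nat.toFinset_factors]
  rw [hfac]
  simp_rw [add_comm (1:ℝ)]
  rw [Finset.prod_add]
  refine Finset.sum_congr rfl fun t ht => ?_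
  rw [Finset.mem_powerset] at ht
  have hprimes : ∀ p ∈ t, p.Prime := fun p hpt =>
    Nat.prime_of_mem_primeFactors (ht hpt)
  have : (t.val.prod).primeFactors = t := by
    have : t.val.prod = ∏ p ∈ t, p := by
      rw [Finset.prod_eq_multiset_prod]; simp
    rw [this]
    exact Nat.primeFactors_prod hprimes
  rw [this]
  simp
end

section
/- For real z > 1 and M > 1, the contour integral (1/2πi) ∫_{Re s = -1/2} M^s/(s+1)^z ds equals (1/M) · (log M)^{z-1}/Γ(z). -/
open Complex MeasureTheory Real Set Filter Metric
open scoped Topology FourierTransform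

lemma auxR {c b : ℝ} (hc : -1 < c) (hb : 0 < b) :
    IntegrableOn (fun t : ℝ => t ^ c * Real.exp (-b * t)) (Ioi 0) := by
  simpa [Real.rpow_one] using integrableOn_rpow_mul_exp_neg_mul_rpow (p := 1) hc zero_lt_one hb

lemma auxC {a : ℂ} (ha : 0 < a.re) {b : ℂ} (hb : 0 < b.re) :
    IntegrableOn (fun t : ℝ => (t : ℂ) ^ (a - 1) * Complex.exp (-(b * t))) (Ioi 0) := by
  have hmeas : AEStronglyMeasurable (fun t : ℝ => (t : ℂ) ^ (a - 1) * Complex.exp (-(b * t)))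
      (volume.restrict (Ioi 0)) := by
    apply ContinuousOn.aestronglyMeasurable ?_ measurableSet_Ioi
    apply ContinuousOn.mul
    · exact ContinuousOn.cpow Complex.continuous_ofReal.continuousOn continuousOn_const
        (fun t ht => Or.inl (by exact_mod_cast ht))
    · exact (Complex.continuous_exp.comp (by continuity)).continuousOn
  refine Integrable.mono' (g := fun t => t ^ (a.re - 1) * Real.exp (-b.re * t))
    (auxR (by linarith) hb) hmeas ?_
  filter_upwards [ae_restrict_mem measurableSet_Ioi] with t ht
  rw [norm_mul]
  gcongr
  · exact Real.rpow_nonneg (le_of_lt ht) _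
  · rw [Complex.norm_cpow_eq_rpow_re_of_pos ht]
    simp
  · rw [Complex.norm_exp]
    simp [mul_comm]

lemma gamma_int {a : ℂ} (ha : 0 < a.re) : ∀ {b : ℂ}, 0 < b.re →
    (∫ t : ℝ in Ioi 0, (t : ℂ) ^ (a - 1) * Complex.exp (-(b * t))) = (1 / b) ^ a * Complex.Gamma a := by
  set F : ℂ → ℂ := fun c => ∫ t : ℝ in Ioi 0, (t : ℂ) ^ (a - 1) * Complex.exp (-(c * t)) with hF
  set G : ℂ → ℂ := fun c => (1 / c) ^ a * Complex.Gamma a with hG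
  set U : Set ℂ := {c : ℂ | 0 < c.re} with hU
  have hUo : IsOpen U := isOpen_lt continuous_const Complex.continuous_re
  have hUc : Convex ℝ U := convex_halfSpace_re_gt 0
  suffices h : EqOn F G U by intro b hb; exact h hb
  have hFd : ∀ b₀ ∈ U, HasDerivAt F (∫ t : ℝ in Ioi 0,
      (t : ℂ) ^ (a - 1) * (Complex.exp (-(b₀ * t)) * (-t))) b₀ := by
    intro b₀ hb₀
    have hb₀' : 0 < b₀.re := hb₀
    have hε : 0 < b₀.re / 2 := half_pos hb₀'
    have := hasDerivAt_integral_of_dominated_loc_of_deriv_le (s := ball b₀ (b₀.re / 2))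
      (F := fun c t => (t : ℂ) ^ (a - 1) * Complex.exp (-(c * t)))
      (F' := fun c (t : ℝ) => (t : ℂ) ^ (a - 1) * (Complex.exp (-(c * t)) * (-t)))
      (bound := fun t : ℝ => t ^ a.re * Real.exp (-(b₀.re / 2) * t))
      (μ := volume.restrict (Ioi 0)) (x₀ := b₀) (ball_mem_nhds b₀ hε) ?_ ?_ ?_ ?_ ?_ ?_
    · exact this.2
    · exact Eventually.of_forall fun c => by
        apply ContinuousOn.aestronglyMeasurable ?_ measurableSet_Ioi
        apply ContinuousOn.mul
        · exact ContinuousOn.cpow Complex.continuous_ofReal.continuousOn continuousOn_const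
            (fun t ht => Or.inl (by exact_mod_cast ht))
        · exact (Complex.continuous_exp.comp (by continuity)).continuousOn
    · exact auxC ha hb₀
    · apply ContinuousOn.aestronglyMeasurable ?_ measurableSet_Ioi
      apply ContinuousOn.mul
      · exact ContinuousOn.cpow Complex.continuous_ofReal.continuousOn continuousOn_const
          (fun t ht => Or.inl (by exact_mod_cast ht))
      · exact ((Complex.continuous_exp.comp (by continuity)).mul (by continuity)).continuousOn
    · filter_upwards [ae_restrict_mem measurableSet_Ioi] with t ht c hc
      have ht' : (0:ℝ) < t := ht
      have hcre : b₀.re / 2 ≤ c.re := by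
        have : |c.re - b₀.re| ≤ dist c b₀ := by
          rw [Complex.dist_eq]
          simpa using Complex.abs_re_le_norm (c - b₀)
        have := (abs_le.mp this).1
        have hd : dist c b₀ < b₀.re / 2 := mem_ball.mp hc
        linarith
      rw [norm_mul, norm_mul, Complex.norm_exp,
        Complex.norm_cpow_eq_rpow_re_of_pos ht]
      have h1 : t ^ (a.re - 1) * t = t ^ a.re := by
        rw [← Real.rpow_add_one (ne_of_gt ht)]; ring_nf
      have : ‖(-(t:ℂ))‖ = t := by simpa using abs_of_pos ht'
      rw [this, Complex.sub_re, Complex.one_re]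
      calc t ^ (a.re - 1) * (Real.exp ((-(c * t)).re) * t)
          = t ^ a.re * Real.exp (-(c.re * t)) := by
            rw [← h1]; simp [Complex.neg_re, Complex.mul_re]; ring
        _ ≤ t ^ a.re * Real.exp (-(b₀.re / 2) * t) := by
            gcongr
            all_goals nlinarith [Real.rpow_nonneg ht'.le a.re,
              mul_le_mul_of_nonneg_right hcre ht'.le]
    · exact auxR (by linarith) hε
    · filter_upwards [ae_restrict_mem measurableSet_Ioi] with t ht c hc
      have h1 : HasDerivAt (fun c : ℂ => -(c * (t:ℂ))) (-(t:ℂ)) c := by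
        exact (hasDerivAt_mul_const (t : ℂ)).neg
      simpa [mul_comm] using (h1.cexp).const_mul ((t : ℂ) ^ (a - 1))
  have hFa : AnalyticOnNhd ℂ F U := by
    apply DifferentiableOn.analyticOnNhd ?_ hUo
    exact fun b hb => ((hFd b hb).differentiableAt).differentiableWithinAt
  have hGa : AnalyticOnNhd ℂ G U := by
    apply DifferentiableOn.analyticOnNhd ?_ hUo
    intro c hc
    have hc0 : c ≠ 0 := by rintro rfl; simpa [hU] using hc
    apply DifferentiableAt.differentiableWithinAt
    apply DifferentiableAt.mul_const
    apply DifferentiableAt.cpow ((differentiableAt_const 1).div differentiableAt_id hc0)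
      (differentiableAt_const a)
    refine Or.inl ?_
    show 0 < (1 / c).re; rw [one_div, Complex.inv_re]
    exact div_pos hc (Complex.normSq_pos.mpr hc0)
  have hfreq : ∃ᶠ c in 𝓝[≠] (1 : ℂ), F c = G c := by
    have hmem : ∀ r : ℝ, 0 < r → F r = G r := by
      intro r hr
      have := integral_cpow_mul_exp_neg_mul_Ioi ha hr
      simp only [hF, hG]
      rw [show (fun t : ℝ => (t : ℂ) ^ (a - 1) * Complex.exp (-((r:ℂ) * t))) =
        (fun t : ℝ => (t : ℂ) ^ (a - 1) * Complex.exp (-(r * t))) from ?_]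
      · rw [this]
      · funext t; push_cast; ring_nf
    have htend : Tendsto (fun n : ℕ => ((1 + (n + 1 : ℝ)⁻¹ : ℝ) : ℂ)) atTop (𝓝[≠] 1) := by
      rw [tendsto_nhdsWithin_iff]
      constructor
      · have h1 : Tendsto (fun n : ℕ => (1 + (n + 1 : ℝ)⁻¹ : ℝ)) atTop (𝓝 1) := by
          have : Tendsto (fun n : ℕ => 1 / ((n : ℝ) + 1)) atTop (𝓝 0) :=
            tendsto_one_div_add_atTop_nhds_zero_nat
          simp only [one_div] at this
          simpa using tendsto_const_nhds.add this
        have h2 := (Complex.continuous_ofReal.tendsto 1).comp h1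
        rw [show (fun n : ℕ => ((1 + (n + 1 : ℝ)⁻¹ : ℝ) : ℂ)) =
          (Complex.ofReal ∘ fun n : ℕ => (1 + (n + 1 : ℝ)⁻¹ : ℝ)) from rfl,
          show (1:ℂ) = ((1:ℝ):ℂ) from (Complex.ofReal_one).symm]
        exact h2
      · filter_upwards with n
        simp only [mem_compl_iff, mem_singleton_iff]
        intro h
        have h2 : (1 + (n + 1 : ℝ)⁻¹ : ℝ) = 1 := by exact_mod_cast h
        have h3 : ((n:ℝ) + 1)⁻¹ = 0 := by linarith
        rw [inv_eq_zero] at h3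
        linarith
    apply htend.frequently
    apply Frequently.of_forall
    intro n
    exact hmem _ (by positivity)
  exact hFa.eqOn_of_preconnected_of_frequently_eq hGa hUc.isPreconnected (by norm_num [hU]) hfreq

noncomputable def fz (z : ℝ) : ℝ → ℂ :=
  fun x => ((Real.exp (-x / 2) * (max x 0) ^ (z - 1) / Real.Gamma z : ℝ) : ℂ)

lemma fz_zero (z : ℝ) (hz : 1 < z) {x : ℝ} (hx : x ≤ 0) : fz z x = 0 := by
  have : max x 0 = 0 := max_eq_right hx
  simp [fz, this, Real.zero_rpow (by linarith : z - 1 ≠ 0)]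

lemma fz_cont (z : ℝ) (hz : 1 < z) : Continuous (fz z) := by
  apply Complex.continuous_ofReal.comp
  apply Continuous.div_const
  apply Continuous.mul
  · exact Real.continuous_exp.comp (by continuity)
  · have h1 : Continuous fun y : ℝ => y ^ (z - 1) :=
      continuous_iff_continuousAt.2 fun y =>
        Real.continuousAt_rpow_const y _ (Or.inr (by linarith))
    exact h1.comp (continuous_id.max continuous_const)

lemma fz_int (z : ℝ) (hz : 1 < z) : Integrable (fz z) := by
  rw [← integrableOn_univ, ← Iic_union_Ioi (a := (0:ℝ))]
  apply IntegrableOn.union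
  · exact (integrableOn_congr_fun (fun x (hx : x ∈ Iic 0) => (fz_zero z hz hx).symm)
      measurableSet_Iic).mp integrableOn_zero
  · apply IntegrableOn.congr_fun (f := fun x : ℝ =>
      ((x ^ (z - 1) * Real.exp (-(1/2 : ℝ) * x) / Real.Gamma z : ℝ) : ℂ))
    · have hΓ : 0 < Real.Gamma z := Real.Gamma_pos_of_pos (by linarith)
      rw [IntegrableOn, ← integrable_norm_iff]
      · apply Integrable.congr
          (((auxR (c := z - 1) (b := 1/2) (by linarith) (by norm_num)).div_const (Real.Gamma z)))
        filter_upwards [ae_restrict_mem measurableSet_Ioi] with t ht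
        have ht' : (0:ℝ) < t := ht
        rw [Complex.norm_real, Real.norm_eq_abs]
        exact (_root_.abs_of_nonneg (by positivity)).symm
      · have h1 : Continuous fun y : ℝ => y ^ (z - 1) :=
          continuous_iff_continuousAt.2 fun y =>
            Real.continuousAt_rpow_const y _ (Or.inr (by linarith))
        exact (Complex.continuous_ofReal.comp
          ((h1.mul (by continuity)).div_const _)).aestronglyMeasurable.restrict
    · intro x hx
      have hx' : (0:ℝ) < x := hx
      simp only [fz, max_eq_left hx'.le]
      push_cast
      ring
    · exact measurableSet_Ioi

lemma fz_fourier (z : ℝ) (hz : 1 < z) (w : ℝ) :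
    𝓕 (fz z) w = (1 / ((1/2 : ℂ) + 2 * π * w * I)) ^ (z : ℂ) := by
  have hΓ : 0 < Real.Gamma z := Real.Gamma_pos_of_pos (by linarith)
  rw [Real.fourier_real_eq_integral_exp_smul]
  have h0 : ∀ v : ℝ, v ∉ Ioi (0:ℝ) → Complex.exp (↑(-2 * π * v * w) * I) • fz z v = 0 := by
    intro v hv
    rw [fz_zero z hz (by simpa using hv), smul_zero]
  rw [← setIntegral_eq_integral_of_forall_compl_eq_zero h0]
  have hbre : (0:ℝ) < ((1/2 : ℂ) + 2 * π * w * I).re := by simp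
  have key := gamma_int (a := (z:ℂ)) (by simpa using by linarith : 0 < (z:ℂ).re)
      (b := (1/2 : ℂ) + 2 * π * w * I) hbre
  have hcongr : ∀ v ∈ Ioi (0:ℝ), Complex.exp (↑(-2 * π * v * w) * I) • fz z v
      = (Real.Gamma z : ℂ)⁻¹ •
        ((v:ℂ) ^ ((z:ℂ) - 1) * Complex.exp (-(((1/2 : ℂ) + 2 * π * w * I) * v))) := by
    intro v hv
    have hv' : (0:ℝ) < v := hv
    simp only [fz, max_eq_left hv'.le, smul_eq_mul]
    have hexp : Complex.exp (-(((1/2 : ℂ) + 2 * π * w * I) * v))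
        = Complex.exp (↑(-2 * π * v * w) * I) * Complex.exp (↑(-v / 2) : ℂ) := by
      rw [← Complex.exp_add]; congr 1; push_cast; ring
    have h1 : ((rexp (-v / 2) * v ^ (z - 1) / Real.Gamma z : ℝ) : ℂ)
        = Complex.exp ((↑(-v / 2) : ℂ)) * (v:ℂ) ^ ((z:ℂ) - 1) / (Real.Gamma z : ℂ) := by
      rw [Complex.ofReal_div, Complex.ofReal_mul, Complex.ofReal_exp, Complex.ofReal_cpow hv'.le]
      norm_cast
    rw [h1, hexp]
    field_simp
  rw [setIntegral_congr_fun measurableSet_Ioi hcongr, integral_smul, key, Complex.Gamma_ofReal,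
    smul_eq_mul]
  rw [mul_comm ((1 / ((1/2 : ℂ) + 2 * π * w * I)) ^ (z:ℂ)) _, ← mul_assoc,
    inv_mul_cancel₀ (by exact_mod_cast hΓ.ne'), one_mul]

lemma fz_def (z : ℝ) : fz z = fun x : ℝ =>
  ((Real.exp (-x / 2) * (max x 0) ^ (z - 1) / Real.Gamma z : ℝ) : ℂ) := rfl

lemma fz_fourier_int (z : ℝ) (hz : 1 < z) : Integrable (𝓕 (fz z)) := by
  have heq : 𝓕 (fz z) = fun w : ℝ => (1 / ((1/2 : ℂ) + 2 * π * w * I)) ^ (z : ℂ) :=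
    funext (fz_fourier z hz)
  rw [heq]
  have hb : ∀ w : ℝ, ((1/2 : ℂ) + 2 * π * w * I) ≠ 0 := by
    intro w h
    have := congrArg Complex.re h
    simp at this
  have hcont : Continuous fun w : ℝ => (1 / ((1/2 : ℂ) + 2 * π * w * I)) ^ (z : ℂ) := by
    rw [continuous_iff_continuousAt]
    intro w
    apply ContinuousAt.cpow ?_ continuousAt_const ?_
    · exact (continuousAt_const.div (by fun_prop) (hb w))
    · left
      rw [one_div, Complex.inv_re]
      apply div_pos ?_ (Complex.normSq_pos.mpr (hb w))
      simp
  have habs : ∀ w : ℝ, (1 + |w|) / 4 ≤ ‖((1/2 : ℂ) + 2 * π * w * I)‖ := by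
    intro w
    set b := (1/2 : ℂ) + 2 * π * w * I with hbdef
    have h1 : b.re = 1/2 := by simp [hbdef]
    have h2 : b.im = 2 * π * w := by simp [hbdef]
    have h3 : (1/2 : ℝ) ≤ ‖b‖ := h1 ▸ (Complex.re_le_norm b)
    have h4 : |2 * π * w| ≤ ‖b‖ := h2 ▸ (Complex.abs_im_le_norm b)
    have h5 : |w| ≤ |2 * π * w| := by
      rw [abs_mul, abs_mul, abs_of_pos Real.pi_pos, abs_of_pos (by norm_num : (0:ℝ) < 2)]
      nlinarith [Real.pi_gt_three, abs_nonneg w]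
    nlinarith
  apply Integrable.mono' (g := fun w : ℝ => (4:ℝ) ^ z * (1 + ‖w‖) ^ (-z)) ?_
    hcont.aestronglyMeasurable
  · filter_upwards with w
    have hb4 : (0:ℝ) < 1 + |w| := by positivity
    have habspos : (0:ℝ) < ‖((1/2 : ℂ) + 2 * π * w * I)‖ := by
      have := habs w; nlinarith
    have hnorm : ‖(1 / ((1/2 : ℂ) + 2 * π * w * I)) ^ (z : ℂ)‖
        = (‖((1/2 : ℂ) + 2 * π * w * I)‖)⁻¹ ^ z := by
      rw [Complex.norm_cpow_of_ne_zero (one_div_ne_zero (hb w))]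
      simp [map_div₀]
    rw [hnorm]
    have hle : (‖((1/2 : ℂ) + 2 * π * w * I)‖)⁻¹ ≤ 4 / (1 + |w|) := by
      rw [inv_eq_one_div, div_le_div_iff₀ habspos hb4]
      nlinarith [habs w]
    calc (‖((1/2 : ℂ) + 2 * π * w * I)‖)⁻¹ ^ z ≤ (4 / (1 + |w|)) ^ z :=
          Real.rpow_le_rpow (by positivity) hle (by linarith)
      _ = (4:ℝ) ^ z * (1 + ‖w‖) ^ (-z) := by
          rw [Real.div_rpow (by norm_num) hb4.le, Real.rpow_neg (by positivity),
            div_eq_mul_inv, Real.norm_eq_abs]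
  · have h1 : ((Module.finrank ℝ ℝ : ℝ) : ℝ) < z := by
      simp [Module.finrank_self]; linarith
    exact (integrable_one_add_norm h1).const_mul _

/-- Hankel-type evaluation: for real `z > 1` and `M > 1`,
`(1/2πi) ∫_{Re s = -1/2} M^s/(s+1)^z ds = (1/M) (log M)^{z-1}/Γ(z)`.
Parametrizing `s = -1/2 + it`, `ds = i dt`, the left side is
`(1/2π) ∫_ℝ M^{-1/2+it}/((-1/2+it)+1)^z dt`. -/
theorem stmt8 (z M : ℝ) (hz : 1 < z) (hM : 1 < M) :
    (1 / (2 * Real.pi)) * ∫ t : ℝ,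
        Complex.exp ((-1/2 + t * I) * Real.log M) / ((-1/2 + t * I) + 1) ^ (z : ℂ) =
      (((1 / M) * Real.log M ^ (z - 1) / Real.Gamma z : ℝ) : ℂ) := by
  have hL : 0 < Real.log M := Real.log_pos hM
  set L := Real.log M with hLdef
  -- Fourier inversion at L
  have hinv := (fz_int z hz).fourierInv_fourier_eq (fz_fourier_int z hz)
    ((fz_cont z hz).continuousAt (x := L))
  rw [Real.fourierInv_eq'] at hinv
  simp_rw [fz_fourier z hz, smul_eq_mul, RCLike.inner_apply, starRingEnd_apply, star_trivial]
    at hinv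
  -- hinv : ∫ w, cexp (↑(2π (w * L)) * I) * (1/(1/2+2πwI))^z = fz z L
  -- substitution t = 2π w in the goal integral
  have harg : ∀ t : ℝ, ((-1/2 + (t:ℂ) * I) + 1) = (1/2 + t * I) := fun t => by ring
  simp_rw [harg]
  set g : ℝ → ℂ := fun t => Complex.exp ((-1/2 + (t:ℂ) * I) * L) / (1/2 + (t:ℂ) * I) ^ (z:ℂ)
    with hg
  have hsub := MeasureTheory.Measure.integral_comp_mul_left g (2 * π)
  -- hsub : ∫ w, g (2π * w) = |(2π)⁻¹| • ∫ t, g t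
  have habs : |(2 * π)⁻¹| = (2 * π)⁻¹ := abs_of_pos (by positivity)
  rw [habs] at hsub
  have hb : ∀ w : ℝ, ((1/2 : ℂ) + 2 * π * w * I) ≠ 0 := by
    intro w h
    have := congrArg Complex.re h
    simp at this
  have hgw : ∀ w : ℝ, g (2 * π * w) = Complex.exp ((-L/2 : ℝ) : ℂ) *
      (Complex.exp ((↑(2 * π * (w * L)) : ℂ) * I) * (1 / ((1/2 : ℂ) + 2 * π * w * I)) ^ (z:ℂ)) := by
    intro w
    have harg : ((1/2 : ℂ) + (↑(2 * π * w) : ℂ) * I) = ((1/2 : ℂ) + 2 * π * w * I) := by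
      push_cast; ring
    have hexp : Complex.exp ((-1/2 + (↑(2 * π * w) : ℂ) * I) * L)
        = Complex.exp ((-L/2 : ℝ) : ℂ) * Complex.exp ((↑(2 * π * (w * L)) : ℂ) * I) := by
      rw [← Complex.exp_add]; congr 1; push_cast; ring
    have hpow : (1 / ((1/2 : ℂ) + 2 * π * w * I)) ^ (z:ℂ)
        = (((1/2 : ℂ) + 2 * π * w * I) ^ (z:ℂ))⁻¹ := by
      rw [one_div, Complex.inv_cpow]
      intro h
      rw [Complex.arg_eq_pi_iff] at h
      have : (0:ℝ) < ((1/2 : ℂ) + 2 * π * w * I).re := by simp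
      linarith [h.1]
    rw [hg]
    simp only [harg, hexp, hpow]
    rw [div_eq_mul_inv]
    ring
  simp_rw [hgw] at hsub
  simp_rw [mul_comm L] at hinv
  rw [integral_const_mul, hinv] at hsub
  -- hsub : cexp(-L/2) * fz z L = (2π)⁻¹ • ∫ t, g t
  have h2pi : (2 * π : ℝ) ≠ 0 := by positivity
  have hgoal : (∫ t : ℝ, g t) = (2 * π : ℝ) • (Complex.exp ((-L/2 : ℝ) : ℂ) * fz z L) := by
    rw [hsub, smul_smul, mul_inv_cancel₀ h2pi, one_smul]
  rw [hgoal]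
  rw [fz_def]
  simp only [max_eq_left hL.le]
  rw [real_smul, ← Complex.ofReal_exp]
  push_cast
  have hM0 : (0:ℝ) < M := by linarith
  have hexpC : Complex.exp (-(L:ℂ)/2) * Complex.exp (-(L:ℂ)/2) = ((1/M : ℝ) : ℂ) := by
    rw [← Complex.exp_add, show (-(L:ℂ)/2 + -(L:ℂ)/2) = ((-L : ℝ) : ℂ) by push_cast; ring]
    rw [← Complex.ofReal_exp, Real.exp_neg, hLdef, Real.exp_log hM0, ← one_div]
  rw [one_div, inv_mul_cancel_left₀
    (mul_ne_zero two_ne_zero (Complex.ofReal_ne_zero.mpr Real.pi_ne_zero))]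
  rw [show Complex.exp (-(L:ℂ)/2) * (Complex.exp (-(L:ℂ)/2) * (↑(L ^ (z-1)) : ℂ) /
      (↑(Real.Gamma z) : ℂ)) = (Complex.exp (-(L:ℂ)/2) * Complex.exp (-(L:ℂ)/2)) *
      ↑(L ^ (z-1)) / ↑(Real.Gamma z) by ring, hexpC]
  push_cast
  ring
end

section
/- Let d ≡ -1 (mod 4), let a be odd, and e ≥ 2. Then the number of pairs (x,y) mod 2^e with x² - d y² ≡ a (mod 2^e) equals 2^{e+1} if a ≡ 1 (mod 4), and equals 0 if a ≡ 3 (mod 4). -/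
private def cnt (d a : ℤ) (n m : ℕ) : Finset (ℕ × ℕ) :=
  (Finset.range n ×ˢ Finset.range n).filter
    (fun p => ((p.1:ℤ)^2 - d*(p.2:ℤ)^2) % (m:ℤ) = a % (m:ℤ))

private lemma shift_cong (d : ℤ) (n : ℕ) (hn : 2 ∣ n) (x y b c : ℤ) :
    (x + n*b)^2 - d*(y + n*c)^2 ≡ x^2 - d*y^2 [ZMOD ((2*n : ℕ) : ℤ)] := by
  obtain ⟨k, hk⟩ := hn
  refine Int.modEq_iff_dvd.mpr ⟨-(b*x + k*b^2 - d*c*y - d*k*c^2), ?_⟩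
  push_cast [hk]; ring

private lemma quad (d a : ℤ) (n : ℕ) (hn : 2 ∣ n) (hpos : 0 < n) :
    (cnt d a (2*n) (2*n)).card = 4 * (cnt d a n (2*n)).card := by
  have key : ∀ x y : ℕ, x < 2*n → y < 2*n →
      ((((x % n : ℕ)):ℤ)^2 - d*(((y % n : ℕ)):ℤ)^2 ≡ (x:ℤ)^2 - d*(y:ℤ)^2
        [ZMOD ((2*n : ℕ) : ℤ)]) := by
    intro x y _ _
    have hx : (x:ℤ) = ((x % n : ℕ) : ℤ) + (n:ℤ) * ((x / n : ℕ) : ℤ) := by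
      exact_mod_cast (Nat.mod_add_div x n).symm
    have hy : (y:ℤ) = ((y % n : ℕ) : ℤ) + (n:ℤ) * ((y / n : ℕ) : ℤ) := by
      exact_mod_cast (Nat.mod_add_div y n).symm
    calc ((x % n : ℕ):ℤ)^2 - d*((y % n : ℕ):ℤ)^2
        ≡ (((x % n : ℕ):ℤ) + n*0)^2 - d*(((y % n : ℕ):ℤ) + n*0)^2 [ZMOD ((2*n:ℕ):ℤ)] := by
          ring_nf; exact Int.ModEq.refl _
      _ ≡ _ [ZMOD ((2*n:ℕ):ℤ)] := by
          rw [hx, hy]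
          exact ((shift_cong d n hn _ _ 0 0).trans
            (shift_cong d n hn _ _ _ _).symm)
  have hcard : ((cnt d a n (2*n)) ×ˢ ((Finset.range 2) ×ˢ (Finset.range 2))).card
      = 4 * (cnt d a n (2*n)).card := by
    simp [Finset.card_product, Nat.mul_comm]
  rw [← hcard]
  apply Finset.card_bij' (fun p _ => ((p.1 % n, p.2 % n), (p.1 / n, p.2 / n)))
    (fun q _ => (q.1.1 + q.2.1 * n, q.1.2 + q.2.2 * n))
  · rintro ⟨x, y⟩ hp
    simp only [cnt, Finset.mem_filter, Finset.mem_product, Finset.mem_range] at hp ⊢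
    obtain ⟨⟨hx, hy⟩, hc⟩ := hp
    exact ⟨⟨⟨Nat.mod_lt _ hpos, Nat.mod_lt _ hpos⟩, (key x y hx hy).trans hc⟩,
      (Nat.div_lt_iff_lt_mul hpos).mpr (by omega),
      (Nat.div_lt_iff_lt_mul hpos).mpr (by omega)⟩
  · rintro ⟨⟨x0, y0⟩, b, c⟩ hq
    simp only [cnt, Finset.mem_filter, Finset.mem_product, Finset.mem_range] at hq ⊢
    obtain ⟨⟨⟨hx0, hy0⟩, hcond⟩, hb, hc⟩ := hq
    have hb' : b = 0 ∨ b = 1 := by omega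
    have hc' : c = 0 ∨ c = 1 := by omega
    refine ⟨⟨by rcases hb' with rfl | rfl <;> omega,
      by rcases hc' with rfl | rfl <;> omega⟩, ?_⟩
    have hcast1 : ((x0 + b * n : ℕ) : ℤ) = (x0 : ℤ) + (n : ℤ) * (b : ℤ) := by push_cast; ring
    have hcast2 : ((y0 + c * n : ℕ) : ℤ) = (y0 : ℤ) + (n : ℤ) * (c : ℤ) := by push_cast; ring
    rw [hcast1, hcast2]
    exact (shift_cong d n hn _ _ _ _).trans hcond
  · rintro ⟨x, y⟩ hp
    simp only [Prod.mk.injEq]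
    exact ⟨Nat.mod_add_div' x n, Nat.mod_add_div' y n⟩
  · rintro ⟨⟨x0, y0⟩, b, c⟩ hq
    simp only [cnt, Finset.mem_filter, Finset.mem_product, Finset.mem_range] at hq
    obtain ⟨⟨⟨hx0, hy0⟩, _⟩, hb, hc⟩ := hq
    simp only [Prod.mk.injEq]
    refine ⟨⟨?_, ?_⟩, ?_, ?_⟩
    · rw [Nat.add_mul_mod_self_right, Nat.mod_eq_of_lt hx0]
    · rw [Nat.add_mul_mod_self_right, Nat.mod_eq_of_lt hy0]
    · rw [Nat.add_mul_div_right _ _ hpos, Nat.div_eq_of_lt hx0]; omega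
    · rw [Nat.add_mul_div_right _ _ hpos, Nat.div_eq_of_lt hy0]; omega


private lemma fcong {d m x x' y y' : ℤ} (hx : x ≡ x' [ZMOD m]) (hy : y ≡ y' [ZMOD m]) :
    x^2 - d*y^2 ≡ x'^2 - d*y'^2 [ZMOD m] := (hx.pow 2).sub ((hy.pow 2).mul_left d)

private lemma swap_cong1 (N x : ℕ) : (((if x = N then 0 else x) : ℕ) : ℤ) ≡ (x:ℤ) [ZMOD (N:ℤ)] := by
  rcases eq_or_ne x N with h | h
  · rw [if_pos h, h]
    simp [Int.ModEq, Int.emod_self]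
  · rw [if_neg h]

private lemma swap_cong2 (N x : ℕ) : (((if x = 0 then N else x) : ℕ) : ℤ) ≡ (x:ℤ) [ZMOD (N:ℤ)] := by
  rcases eq_or_ne x 0 with h | h
  · rw [if_pos h, h]
    simp [Int.ModEq, Int.emod_self]
  · rw [if_neg h]

private lemma icc_card (d a : ℤ) (N : ℕ) (hN : 1 ≤ N) :
    ((Finset.Icc 1 N ×ˢ Finset.Icc 1 N).filter
        (fun xy : ℕ × ℕ => ((xy.1 : ℤ) ^ 2 - d * (xy.2 : ℤ) ^ 2) % (N:ℤ)
          = a % (N:ℤ))).card = (cnt d a N N).card := by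
  apply Finset.card_bij' (fun p _ => ((if p.1 = N then 0 else p.1), (if p.2 = N then 0 else p.2)))
    (fun q _ => ((if q.1 = 0 then N else q.1), (if q.2 = 0 then N else q.2)))
  · rintro ⟨x, y⟩ hp
    simp only [Finset.mem_filter, Finset.mem_product, Finset.mem_Icc] at hp
    simp only [cnt, Finset.mem_filter, Finset.mem_product, Finset.mem_range]
    refine ⟨⟨by split <;> omega, by split <;> omega⟩, ?_⟩
    exact (fcong (swap_cong1 N x) (swap_cong1 N y)).trans hp.2
  · rintro ⟨x, y⟩ hq
    simp only [cnt, Finset.mem_filter, Finset.mem_product, Finset.mem_range] at hq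
    simp only [Finset.mem_filter, Finset.mem_product, Finset.mem_Icc]
    refine ⟨⟨⟨by split <;> omega, by split <;> omega⟩, by split <;> omega, by split <;> omega⟩, ?_⟩
    exact (fcong (swap_cong2 N x) (swap_cong2 N y)).trans hq.2
  · rintro ⟨x, y⟩ hp
    simp only [Finset.mem_filter, Finset.mem_product, Finset.mem_Icc] at hp
    have h1 := hp.1.1; have h2 := hp.1.2
    simp only [Prod.mk.injEq]
    constructor <;> (split <;> split <;> omega)
  · rintro ⟨x, y⟩ hq
    simp only [cnt, Finset.mem_filter, Finset.mem_product, Finset.mem_range] at hq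
    simp only [Prod.mk.injEq]
    constructor <;> (split <;> split <;> omega)

private def flp (h x : ℕ) : ℕ := if x < h then x + h else x - h

private def sgm (h : ℕ) (p : ℕ × ℕ) : ℕ × ℕ :=
  if p.1 % 2 = 1 then (flp h p.1, p.2) else (p.1, flp h p.2)

private lemma flip_lt {h x : ℕ} (hpos : 0 < h) (hx : x < 2*h) : flp h x < 2*h := by
  unfold flp; split <;> omega

private lemma flip_flip' {h x : ℕ} (hx : x < 2*h) : flp h (flp h x) = x := by
  unfold flp; split <;> split <;> omega

private lemma flip_parity {h x : ℕ} (h2 : 2 ∣ h) : flp h x % 2 = x % 2 := by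
  unfold flp; split <;> omega

private lemma sig_mem {h : ℕ} {p : ℕ × ℕ} (hpos : 0 < h) (h1 : p.1 < 2*h) (h2 : p.2 < 2*h) :
    (sgm h p).1 < 2*h ∧ (sgm h p).2 < 2*h := by
  unfold sgm; split
  · exact ⟨flip_lt hpos h1, h2⟩
  · exact ⟨h1, flip_lt hpos h2⟩

private lemma sig_sig {h : ℕ} {p : ℕ × ℕ} (hdvd : 2 ∣ h) (h1 : p.1 < 2*h) (h2 : p.2 < 2*h) :
    sgm h (sgm h p) = p := by
  obtain ⟨x, y⟩ := p
  unfold sgm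
  by_cases hx : x % 2 = 1
  · simp only [hx, if_pos, flip_parity hdvd]
    simp [hx, flip_flip' h1]
  · simp only [hx, if_neg, if_false]
    simp [hx, flip_flip' h2]

private lemma flip_sq {h : ℕ} (h4 : 4 ∣ h) {x : ℕ} (hx : x % 2 = 1) (hlt : x < 2*h) :
    ((flp h x : ℕ) : ℤ)^2 ≡ (x:ℤ)^2 + 2*h [ZMOD ((4*h:ℕ):ℤ)] := by
  obtain ⟨g, hg⟩ := h4
  obtain ⟨s, hs⟩ : ∃ s, x = 2*s+1 := ⟨x/2, by omega⟩
  unfold flp; split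
  · refine Int.modEq_iff_dvd.mpr ⟨-((s:ℤ) + g), ?_⟩
    push_cast [hg, hs]; ring
  · have hge : h ≤ x := by omega
    have hc : ((x - h : ℕ) : ℤ) = (x:ℤ) - h := by omega
    rw [hc]
    refine Int.modEq_iff_dvd.mpr ⟨(s:ℤ) + 1 - g, ?_⟩
    push_cast [hg, hs]; ring

private lemma mul_flp_sq {d : ℤ} (hd : Odd d) {h : ℕ} (h4 : 4 ∣ h) {y : ℕ}
    (hy : y % 2 = 1) (hlt : y < 2*h) :
    d * ((flp h y : ℕ) : ℤ)^2 ≡ d * (y:ℤ)^2 + 2*h [ZMOD ((4*h:ℕ):ℤ)] := by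
  obtain ⟨t, ht⟩ := hd
  obtain ⟨c, hc⟩ := Int.modEq_iff_dvd.mp (flip_sq h4 hy hlt)
  -- hc : (y^2 + 2h) - (flp h y)^2 = 4h * c
  refine Int.modEq_iff_dvd.mpr ⟨d*c - t, ?_⟩
  push_cast at hc ⊢
  have hy' : ((flp h y : ℕ) : ℤ)^2 = (y:ℤ)^2 + 2*h - 4*h*c := by linarith
  rw [hy', ht]; ring

private lemma xor_mod {h : ℕ} (hpos : 0 < h) {F a : ℤ}
    (hm : F % ((2*h:ℕ):ℤ) = a % ((2*h:ℕ):ℤ)) :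
    (F % ((4*h:ℕ):ℤ) = a % ((4*h:ℕ):ℤ)) ↔
      ¬ ((F + 2*h) % ((4*h:ℕ):ℤ) = a % ((4*h:ℕ):ℤ)) := by
  obtain ⟨k, hk⟩ := Int.modEq_iff_dvd.mp (hm : F ≡ a [ZMOD ((2*h:ℕ):ℤ)])
  -- hk : a - F = (2h) * k
  push_cast at hk
  constructor
  · intro h1 h2
    obtain ⟨u, hu⟩ := Int.modEq_iff_dvd.mp (h1 : F ≡ a [ZMOD ((4*h:ℕ):ℤ)])
    obtain ⟨v, hv⟩ := Int.modEq_iff_dvd.mp (h2 : F + 2*h ≡ a [ZMOD ((4*h:ℕ):ℤ)])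
    push_cast at hu hv
    have hne : (2*(h:ℤ)) ≠ 0 := by positivity
    have : (2*(h:ℤ)) * (2*u) = (2*(h:ℤ)) * (2*v + 1) := by linarith
    have := mul_left_cancel₀ hne this
    omega
  · intro h2
    rcases Int.even_or_odd k with ⟨u, hu⟩ | ⟨u, hu⟩
    · refine (Int.modEq_iff_dvd.mpr ⟨u, ?_⟩ : F ≡ a [ZMOD ((4*h:ℕ):ℤ)])
      push_cast; rw [hk, hu]; ring
    · exfalso; apply h2
      refine (Int.modEq_iff_dvd.mpr ⟨u, ?_⟩ : F + 2*h ≡ a [ZMOD ((4*h:ℕ):ℤ)])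
      push_cast; rw [show a - (F + 2*(h:ℤ)) = (a - F) - 2*h by ring, hk, hu]; ring

private lemma sgm_shift {d a : ℤ} (hd : Odd d) (ha : Odd a) {h : ℕ} (h4 : 4 ∣ h) {x y : ℕ}
    (hx : x < 2*h) (hy : y < 2*h)
    (hcond : ((x:ℤ)^2 - d*(y:ℤ)^2) % ((2*h:ℕ):ℤ) = a % ((2*h:ℕ):ℤ)) :
    ((((sgm h (x,y)).1 : ℕ):ℤ)^2 - d*(((sgm h (x,y)).2 : ℕ):ℤ)^2)
      ≡ ((x:ℤ)^2 - d*(y:ℤ)^2 + 2*h) [ZMOD ((4*h:ℕ):ℤ)] := by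
  by_cases hpar : x % 2 = 1
  · have : sgm h (x,y) = (flp h x, y) := by unfold sgm; simp [hpar]
    rw [this]
    have h1 := Int.ModEq.sub_right (d*(y:ℤ)^2) (flip_sq h4 hpar hx)
    refine h1.trans (Int.modEq_iff_dvd.mpr ⟨0, by push_cast; ring⟩)
  · have : sgm h (x,y) = (x, flp h y) := by unfold sgm; simp [hpar]
    rw [this]
    have hy2 : y % 2 = 1 := by
      by_contra hy2
      obtain ⟨u, hu⟩ : ∃ u, x = 2*u := ⟨x/2, by omega⟩
      obtain ⟨v, hv⟩ : ∃ v, y = 2*v := ⟨y/2, by omega⟩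
      have h2d : ((2:ℤ)) ∣ ((2*h:ℕ):ℤ) := by push_cast; exact Dvd.intro _ rfl
      have hm2 := Int.ModEq.of_dvd h2d (hcond : _ ≡ _ [ZMOD ((2*h:ℕ):ℤ)])
      have e1 : (x:ℤ)^2 = 4*(u:ℤ)^2 := by rw [hu]; push_cast; ring
      have e2 : d*(y:ℤ)^2 = 4*(d*(v:ℤ)^2) := by rw [hv]; push_cast; ring
      have ha2 : a % 2 = 1 := Int.odd_iff.mp ha
      rw [Int.ModEq] at hm2
      omega
    have h1 := Int.ModEq.sub_left ((x:ℤ)^2) (mul_flp_sq hd h4 hy2 hy)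
    refine h1.trans (Int.modEq_iff_dvd.mpr ⟨1, by push_cast; ring⟩)


private lemma halve (d a : ℤ) (hd : Odd d) (ha : Odd a) (h : ℕ) (h4 : 4 ∣ h) (hpos : 0 < h) :
    (cnt d a (2*h) (2*h)).card = 2 * (cnt d a (2*h) (4*h)).card := by
  classical
  have h2 : 2 ∣ h := dvd_trans ⟨2, rfl⟩ h4
  set base : Finset (ℕ × ℕ) := Finset.range (2*h) ×ˢ Finset.range (2*h) with hbase
  set c1 : ℕ × ℕ → Prop := fun p => ((p.1:ℤ)^2 - d*(p.2:ℤ)^2) % ((2*h:ℕ):ℤ) = a % ((2*h:ℕ):ℤ)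
    with hc1
  set c2 : ℕ × ℕ → Prop := fun p => ((p.1:ℤ)^2 - d*(p.2:ℤ)^2) % ((4*h:ℕ):ℤ) = a % ((4*h:ℕ):ℤ)
    with hc2
  have hdvd24 : ((2*h:ℕ):ℤ) ∣ ((4*h:ℕ):ℤ) := by push_cast; exact ⟨2, by ring⟩
  have hc21 : ∀ p, c2 p → c1 p := fun p hp => Int.ModEq.of_dvd hdvd24 hp
  have hS : cnt d a (2*h) (2*h) = base.filter c1 := rfl
  have hT : cnt d a (2*h) (4*h) = base.filter c2 := rfl
  -- membership facts
  have hmem : ∀ p : ℕ × ℕ, p ∈ base ↔ p.1 < 2*h ∧ p.2 < 2*h := by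
    intro p; simp [hbase, Finset.mem_product]
  -- key toggle: for p in base with c1 p, c2 (sgm h p) ↔ ¬ c2 p
  have htog : ∀ p : ℕ × ℕ, p ∈ base → c1 p → (c2 (sgm h p) ↔ ¬ c2 p) := by
    rintro ⟨x, y⟩ hb hc
    obtain ⟨hx, hy⟩ := (hmem _).mp hb
    have hsh := sgm_shift hd ha h4 hx hy hc
    have hx2 := xor_mod hpos (hc : _)
    constructor
    · intro hc2s hc2p
      exact (hx2.mp hc2p) ((hsh.symm.trans hc2s : _ ≡ _ [ZMOD ((4*h:ℕ):ℤ)]))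
    · intro hnc2
      have : ((x:ℤ)^2 - d*(y:ℤ)^2 + 2*(h:ℤ)) % ((4*h:ℕ):ℤ) = a % ((4*h:ℕ):ℤ) := by
        by_contra hcon
        exact hnc2 (hx2.mpr (by push_cast at hcon ⊢; exact hcon))
      exact (hsh.trans (by push_cast at this ⊢; exact this))
  -- sgm maps S-members to S-members
  have hsgmS : ∀ p : ℕ × ℕ, p ∈ base → c1 p → (sgm h p ∈ base ∧ c1 (sgm h p)) := by
    rintro ⟨x, y⟩ hb hc
    obtain ⟨hx, hy⟩ := (hmem _).mp hb
    obtain ⟨m1, m2⟩ := sig_mem (p := (x,y)) (by omega) hx hy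
    refine ⟨(hmem _).mpr ⟨m1, m2⟩, ?_⟩
    have hsh := sgm_shift hd ha h4 hx hy hc
    have hsh1 : ((((sgm h (x,y)).1 : ℕ):ℤ)^2 - d*(((sgm h (x,y)).2 : ℕ):ℤ)^2)
        ≡ ((x:ℤ)^2 - d*(y:ℤ)^2) [ZMOD ((2*h:ℕ):ℤ)] := by
      refine (Int.ModEq.of_dvd hdvd24 hsh).trans (Int.modEq_iff_dvd.mpr ⟨-1, by push_cast; ring⟩)
    exact hsh1.trans hc
  have hsplit := Finset.card_filter_add_card_filter_not
    (s := base.filter c1) (p := c2)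
  have e1 : (base.filter c1).filter c2 = base.filter c2 := by
    rw [Finset.filter_filter]
    apply Finset.filter_congr
    intro p hp
    constructor
    · exact fun hpq => hpq.2
    · exact fun hq => ⟨hc21 p hq, hq⟩
  have e2 : (Finset.filter (fun p => ¬ c2 p) (base.filter c1)).card
      = (base.filter c2).card := by
    apply Finset.card_bij' (fun p _ => sgm h p) (fun q _ => sgm h q)
    · intro p hp
      obtain ⟨hp1, hnc2⟩ := Finset.mem_filter.mp hp
      obtain ⟨hb, hc1p⟩ := Finset.mem_filter.mp hp1
      exact Finset.mem_filter.mpr ⟨(hsgmS p hb hc1p).1, (htog p hb hc1p).mpr hnc2⟩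
    · intro q hq
      obtain ⟨hb, hc2q⟩ := Finset.mem_filter.mp hq
      have hc1q := hc21 q hc2q
      refine Finset.mem_filter.mpr ⟨Finset.mem_filter.mpr
        ⟨(hsgmS q hb hc1q).1, (hsgmS q hb hc1q).2⟩, ?_⟩
      exact fun hcs => ((htog q hb hc1q).mp hcs) hc2q
    · intro p hp
      obtain ⟨hp1, _⟩ := Finset.mem_filter.mp hp
      obtain ⟨hb, _⟩ := Finset.mem_filter.mp hp1
      obtain ⟨h1', h2'⟩ := (hmem p).mp hb
      exact sig_sig h2 h1' h2'
    · intro q hq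
      obtain ⟨hb, _⟩ := Finset.mem_filter.mp hq
      obtain ⟨h1', h2'⟩ := (hmem q).mp hb
      exact sig_sig h2 h1' h2'
  rw [hS, hT, ← hsplit, e1, e2]
  omega

private lemma izswap1 (N : ℕ) (x : ℤ) (hx : 1 ≤ x) :
    (((if x = (N:ℤ) then 0 else x).toNat : ℤ)) ≡ x [ZMOD (N:ℤ)] := by
  rcases eq_or_ne x (N:ℤ) with h | h
  · rw [if_pos h, h]
    show ((0:ℤ).toNat : ℤ) % (N:ℤ) = (N:ℤ) % (N:ℤ)
    simp [Int.emod_self]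
  · rw [if_neg h]
    have : ((x.toNat : ℤ)) = x := by omega
    rw [this]

private lemma izswap2 (N : ℕ) (q : ℕ) :
    ((if q = 0 then (N:ℤ) else (q:ℤ))) ≡ (q:ℤ) [ZMOD (N:ℤ)] := by
  rcases eq_or_ne q 0 with h | h
  · rw [if_pos h, h]
    show (N:ℤ) % (N:ℤ) = ((0:ℕ):ℤ) % (N:ℤ)
    simp [Int.emod_self]
  · rw [if_neg h]

private lemma icc_card' (d a : ℤ) (N : ℕ) (hN : 1 ≤ N) :
    ((Finset.Icc (1:ℤ) (N:ℤ) ×ˢ Finset.Icc (1:ℤ) (N:ℤ)).filter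
        (fun xy : ℤ × ℤ => ((xy.1) ^ 2 - d * (xy.2) ^ 2) % (N:ℤ) = a % (N:ℤ))).card
      = (cnt d a N N).card := by
  refine Finset.card_bij'
    (fun (p : ℤ × ℤ) _ => ((if p.1 = (N:ℤ) then 0 else p.1).toNat,
                 (if p.2 = (N:ℤ) then 0 else p.2).toNat))
    (fun (q : ℕ × ℕ) _ => ((if q.1 = 0 then (N:ℤ) else (q.1:ℤ)),
                 (if q.2 = 0 then (N:ℤ) else (q.2:ℤ)))) ?_ ?_ ?_ ?_
  · rintro ⟨x, y⟩ hp
    simp only [Finset.mem_filter, Finset.mem_product, Finset.mem_Icc] at hp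
    obtain ⟨⟨⟨hx1, hx2⟩, hy1, hy2⟩, hc⟩ := hp
    simp only [cnt, Finset.mem_filter, Finset.mem_product, Finset.mem_range]
    refine ⟨⟨by split <;> omega, by split <;> omega⟩, ?_⟩
    exact (fcong (izswap1 N x hx1) (izswap1 N y hy1)).trans hc
  · rintro ⟨x, y⟩ hq
    simp only [cnt, Finset.mem_filter, Finset.mem_product, Finset.mem_range] at hq
    obtain ⟨⟨hx, hy⟩, hc⟩ := hq
    simp only [Finset.mem_filter, Finset.mem_product, Finset.mem_Icc]
    refine ⟨⟨⟨by split <;> omega, by split <;> omega⟩,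
             ⟨by split <;> omega, by split <;> omega⟩⟩, ?_⟩
    exact (fcong (izswap2 N x) (izswap2 N y)).trans hc
  · rintro ⟨x, y⟩ hp
    simp only [Finset.mem_filter, Finset.mem_product, Finset.mem_Icc] at hp
    obtain ⟨⟨⟨hx1, hx2⟩, hy1, hy2⟩, _⟩ := hp
    simp only [Prod.mk.injEq]
    constructor <;> (split_ifs <;> omega)
  · rintro ⟨x, y⟩ hq
    simp only [cnt, Finset.mem_filter, Finset.mem_product, Finset.mem_range] at hq
    obtain ⟨⟨hx, hy⟩, _⟩ := hq
    simp only [Prod.mk.injEq]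
    constructor <;> (split_ifs <;> omega)

private lemma cnt_congr {d d' a a' : ℤ} (n m : ℕ) (hd : d ≡ d' [ZMOD (m:ℤ)])
    (ha : a ≡ a' [ZMOD (m:ℤ)]) : cnt d a n m = cnt d' a' n m := by
  unfold cnt
  apply Finset.filter_congr
  rintro ⟨x, y⟩ _
  have h1 : ((x:ℤ)^2 - d*(y:ℤ)^2) % (m:ℤ) = ((x:ℤ)^2 - d'*(y:ℤ)^2) % (m:ℤ) :=
    (Int.ModEq.refl ((x:ℤ)^2)).sub (hd.mul_right _)
  rw [h1, (ha : a % (m:ℤ) = a' % (m:ℤ))]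

private lemma base4 {d a : ℤ} (hd : d % 4 = 3) (ha : a % 4 = 1) :
    (cnt d a 4 4).card = 8 := by
  have hd' : d ≡ 3 [ZMOD ((4:ℕ):ℤ)] := by unfold Int.ModEq; push_cast; omega
  have ha' : a ≡ 1 [ZMOD ((4:ℕ):ℤ)] := by unfold Int.ModEq; push_cast; omega
  rw [cnt_congr 4 4 hd' ha']
  decide

private lemma base8 {d a : ℤ} (hd : d % 4 = 3) (ha : a % 4 = 1) :
    (cnt d a 8 8).card = 16 := by
  have hd' : d ≡ d % 8 [ZMOD ((8:ℕ):ℤ)] := by unfold Int.ModEq; push_cast; omega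
  have ha' : a ≡ a % 8 [ZMOD ((8:ℕ):ℤ)] := by unfold Int.ModEq; push_cast; omega
  rw [cnt_congr 8 8 hd' ha']
  have hd8 : d % 8 = 3 ∨ d % 8 = 7 := by omega
  have ha8 : a % 8 = 1 ∨ a % 8 = 5 := by omega
  rcases hd8 with h1 | h1 <;> rcases ha8 with h2 | h2 <;> rw [h1, h2] <;> decide

private lemma sq4 (x : ℤ) : x^2 % 4 = 0 ∨ x^2 % 4 = 1 := by
  rcases Int.even_or_odd x with ⟨k, hk⟩ | ⟨k, hk⟩
  · left
    have h : x^2 = 4*k^2 := by rw [hk]; ring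
    omega
  · right
    have h : x^2 = 4*(k^2+k)+1 := by rw [hk]; ring
    omega

private lemma cnt_zero {d a : ℤ} (hd : d % 4 = 3) (ha : a % 4 = 3) (e : ℕ) (he : 2 ≤ e) :
    (cnt d a (2^e) (2^e)).card = 0 := by
  rw [Finset.card_eq_zero]
  unfold cnt
  rw [Finset.filter_eq_empty_iff]
  rintro ⟨x, y⟩ _
  intro hc
  dsimp only at hc
  have hdvd : ((4:ℤ)) ∣ ((2^e : ℕ):ℤ) := by
    push_cast
    exact_mod_cast (show (2:ℤ)^2 ∣ 2^e from pow_dvd_pow 2 he)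
  have h4 := Int.ModEq.of_dvd hdvd (hc : _ ≡ _ [ZMOD ((2^e:ℕ):ℤ)])
  have h1 := sq4 (x:ℤ)
  have h2 : (d*(y:ℤ)^2) % 4 = 0 ∨ (d*(y:ℤ)^2) % 4 = 3 := by
    rcases sq4 (y:ℤ) with h | h
    · left; rw [Int.mul_emod, h, hd]; decide
    · right; rw [Int.mul_emod, h, hd]; decide
  have h3 := Int.sub_emod ((x:ℤ)^2) (d*(y:ℤ)^2) 4
  rw [Int.ModEq] at h4
  omega

private lemma main3 {d a : ℤ} (hd : d % 4 = 3) (ha : a % 4 = 1) :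
    ∀ e : ℕ, 3 ≤ e → (cnt d a (2^e) (2^e)).card = 2^(e+1) := by
  intro e he
  induction e, he using Nat.le_induction with
  | base => simpa using base8 hd ha
  | succ e he ih =>
    have hodd : Odd d := Int.odd_iff.mpr (by omega)
    have haodd : Odd a := Int.odd_iff.mpr (by omega)
    have ed : (2:ℕ)^(e+1) = 2*2^e := by ring
    rw [ed]
    rw [quad d a (2^e) (dvd_pow_self 2 (by omega)) (by positivity)]
    have eh : 2*(2^(e-1)) = (2:ℕ)^e := by
      rw [← pow_succ']
      congr 1
      omega
    have eh2 : 4*(2^(e-1)) = 2*(2:ℕ)^e := by omega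
    have h4dvd : (4:ℕ) ∣ 2^(e-1) := by
      have h22 : (2:ℕ)^2 ∣ 2^(e-1) := pow_dvd_pow 2 (by omega)
      simpa using h22
    have hhalve := halve d a hodd haodd (2^(e-1)) h4dvd (by positivity)
    rw [eh, eh2] at hhalve
    have hp1 : (2:ℕ)^(e+1+1) = 2*2^(e+1) := by ring
    have hp2 : (2:ℕ)^(e+1) = 2*2^e := by ring
    omega

/-- Let `d ≡ -1 (mod 4)`, `a` odd, `e ≥ 2`. The number of pairs `(x,y)` mod `2^e`
with `x² - d y² ≡ a (mod 2^e)` is `2^{e+1}` if `a ≡ 1 (mod 4)` and `0` if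
`a ≡ 3 (mod 4)`. -/
theorem stmt10 (d a : ℤ) (hd : d % 4 = 3) (ha : Odd a) (e : ℕ) (he : 2 ≤ e) :
    ((Finset.Icc 1 (2 ^ e) ×ˢ Finset.Icc 1 (2 ^ e)).filter
        (fun xy => ((xy.1 : ℤ) ^ 2 - d * (xy.2 : ℤ) ^ 2) % ((2 : ℤ) ^ e)
          = a % ((2 : ℤ) ^ e))).card =
      if a % 4 = 1 then 2 ^ (e + 1) else 0 := by
  have hcast : ((2:ℤ))^e = ((2^e : ℕ) : ℤ) := by push_cast; ring
  rw [hcast, icc_card' d a (2^e) Nat.one_le_two_pow]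
  have ha2 := Int.odd_iff.mp ha
  have h14 : a % 4 = 1 ∨ a % 4 = 3 := by omega
  rcases h14 with h1 | h3
  · rw [if_pos h1]
    rcases Nat.lt_or_ge e 3 with hlt | hge
    · have he2 : e = 2 := by omega
      subst he2
      simpa using base4 hd h1
    · exact main3 hd h1 e hge
  · rw [if_neg (by omega)]
    exact cnt_zero hd h3 e he
end

section
/- Let p be an odd prime dividing d = β² - 4αγ with p ∤ α and p ∤ a. Then for all e ≥ 1, R_a(p^e)/p^e = 1 + (αa/p), where R_a(p^e) counts pairs (x,y) mod p^e with αx² + βxy + γy² ≡ a mod p^e and (·/p) is the Legendre symbol. -/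
/-- `R_a(q)` counts `(x,y)` with `1 ≤ x,y ≤ q` and
`α x² + β x y + γ y² ≡ a (mod q)`. -/
def Rcount (α β γ a : ℤ) (q : ℕ) : ℕ :=
  ((Finset.Icc 1 q ×ˢ Finset.Icc 1 q).filter
    (fun xy => (α * (xy.1 : ℤ) ^ 2 + β * (xy.1 : ℤ) * (xy.2 : ℤ) + γ * (xy.2 : ℤ) ^ 2) % (q : ℤ)
      = a % (q : ℤ))).card

open Finset

lemma aux_isUnit {n : ℕ} (m : ℤ) (h : IsCoprime m (n : ℤ)) :
    IsUnit ((m : ℤ) : ZMod n) := by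
  obtain ⟨u, v, huv⟩ := h
  refine IsUnit.of_mul_eq_one ((u : ℤ) : ZMod n) ?_
  have := congrArg (Int.cast : ℤ → ZMod n) huv
  push_cast at this
  rw [ZMod.natCast_self] at this
  linear_combination this

lemma aux_coprime {p : ℕ} (hp : p.Prime) {m : ℤ} (h : ¬ (p : ℤ) ∣ m) (e : ℕ) :
    IsCoprime m ((p : ℤ) ^ e) := by
  have hpp : Prime (p : ℤ) := Nat.prime_iff_prime_int.mp hp
  exact IsCoprime.pow_right ((hpp.coprime_iff_not_dvd).mpr h).symm

lemma aux_val_cast {n : ℕ} [NeZero n] (x : ZMod n) : ((x.val : ℕ) : ZMod n) = x := by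
  rw [ZMod.natCast_val, ZMod.cast_id]

lemma aux_unit_iff {p : ℕ} (hp : p.Prime) {e : ℕ} (he : e ≠ 0) (x : ZMod (p ^ e)) :
    IsUnit x ↔ (ZMod.castHom (dvd_pow_self p he) (ZMod p)) x ≠ 0 := by
  haveI : Fact p.Prime := ⟨hp⟩
  haveI : NeZero (p ^ e) := ⟨pow_ne_zero e hp.pos.ne'⟩
  have hx : ((x.val : ℕ) : ZMod (p ^ e)) = x := aux_val_cast x
  have hπ : (ZMod.castHom (dvd_pow_self p he) (ZMod p)) x = ((x.val : ℕ) : ZMod p) := by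
    conv_lhs => rw [← hx]
    exact map_natCast _ _
  constructor
  · intro h
    exact (h.map (ZMod.castHom (dvd_pow_self p he) (ZMod p))).ne_zero
  · intro h
    rw [hπ, Ne, ZMod.natCast_eq_zero_iff] at h
    rw [← hx]
    exact (ZMod.isUnit_iff_coprime _ _).mpr
      (((Nat.Prime.coprime_iff_not_dvd hp).mpr fun hd => h hd).symm.pow_right e)

lemma aux_hensel {p : ℕ} (hp : p.Prime) (hp2 : p ≠ 2) {c s : ℤ}
    (hs : (p : ℤ) ∣ s ^ 2 - c) (hps : ¬ (p : ℤ) ∣ s) :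
    ∀ e, 1 ≤ e → ∃ u : ℤ, ¬ (p : ℤ) ∣ u ∧ (p : ℤ) ^ e ∣ u ^ 2 - c := by
  haveI : Fact p.Prime := ⟨hp⟩
  have hpp : Prime (p : ℤ) := Nat.prime_iff_prime_int.mp hp
  have hp2' : ¬ (p : ℤ) ∣ 2 := by
    intro h
    have := Int.le_of_dvd (by norm_num) h
    have := hp.two_le
    omega
  intro e he
  induction e, he using Nat.le_induction with
  | base => exact ⟨s, hps, by simpa using hs⟩
  | succ n hn ih =>
    obtain ⟨u, hu, hdvd⟩ := ih
    obtain ⟨k, hk⟩ := hdvd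
    have h2u : ((2 * u : ℤ) : ZMod p) ≠ 0 := by
      rw [Ne, ZMod.intCast_zmod_eq_zero_iff_dvd]
      intro h
      rcases hpp.dvd_mul.mp h with h | h
      · exact hp2' h
      · exact hu h
    set t : ℤ := ((-(k : ZMod p) * ((2 * u : ℤ) : ZMod p)⁻¹).val : ℤ) with ht
    have htc : ((t : ℤ) : ZMod p) = -(k : ZMod p) * ((2 * u : ℤ) : ZMod p)⁻¹ := by
      rw [ht]
      push_cast
      rw [ZMod.natCast_val, ZMod.cast_id]
    have hkey : (p : ℤ) ∣ (k + 2 * u * t) := by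
      rw [← ZMod.intCast_zmod_eq_zero_iff_dvd]
      push_cast
      have h2u' : (2 * (u : ZMod p)) ≠ 0 := by push_cast at h2u; exact h2u
      have hu0 : (u : ZMod p) ≠ 0 := right_ne_zero_of_mul h2u'
      have h20 : (2 : ZMod p) ≠ 0 := left_ne_zero_of_mul h2u'
      rw [htc]
      push_cast
      field_simp
      ring
    refine ⟨u + t * (p : ℤ) ^ n, ?_, ?_⟩
    · intro h
      apply hu
      have h1 : (p : ℤ) ∣ t * (p : ℤ) ^ n :=
        dvd_mul_of_dvd_right (dvd_pow_self _ (by omega)) _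
      have := dvd_sub h h1
      simpa using this
    · have heq : (u + t * (p : ℤ) ^ n) ^ 2 - c =
          (p : ℤ) ^ n * (k + 2 * u * t) + ((p : ℤ) ^ n * (p : ℤ) ^ n) * t ^ 2 := by
        linear_combination hk
      rw [heq]
      refine dvd_add ?_ ?_
      · rw [pow_succ]
        exact mul_dvd_mul_left _ hkey
      · rw [← pow_add]
        exact dvd_mul_of_dvd_left (pow_dvd_pow _ (by omega)) _

lemma aux_sqcount {p : ℕ} [hpf : Fact p.Prime] (hp2 : p ≠ 2) {e : ℕ} [NeZero (p ^ e)]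
    (he : 1 ≤ e) {c : ℤ} (hc : ¬ (p : ℤ) ∣ c) :
    ((Finset.univ.filter (fun u : ZMod (p ^ e) => u ^ 2 = (c : ZMod (p ^ e)))).card : ℤ)
      = 1 + legendreSym p c := by
  have hp : p.Prime := hpf.out
  haveI : Fact (1 < p ^ e) :=
    ⟨by calc 1 < p := hp.one_lt
          _ ≤ p ^ e := Nat.le_self_pow (by omega) p⟩
  have he' : e ≠ 0 := by omega
  set π := ZMod.castHom (dvd_pow_self p he') (ZMod p) with hπdef
  have hπc : π ((c : ℤ) : ZMod (p ^ e)) = ((c : ℤ) : ZMod p) := map_intCast _ _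
  have hcbar : ((c : ℤ) : ZMod p) ≠ 0 := by
    rw [Ne, ZMod.intCast_zmod_eq_zero_iff_dvd]; exact hc
  by_cases hsq : IsSquare ((c : ℤ) : ZMod p)
  · -- legendre = 1, two square roots
    rw [(legendreSym.eq_one_iff p hcbar).mpr hsq]
    obtain ⟨σ, hσ⟩ := hsq
    set s : ℤ := ((σ.val : ℕ) : ℤ) with hsdef
    have hσcast : ((s : ℤ) : ZMod p) = σ := by
      rw [hsdef]; push_cast; rw [ZMod.natCast_val, ZMod.cast_id]
    have hs : (p : ℤ) ∣ s ^ 2 - c := by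
      rw [← ZMod.intCast_zmod_eq_zero_iff_dvd]
      push_cast
      rw [hσcast]
      rw [hσ]; ring
    have hps : ¬ (p : ℤ) ∣ s := by
      intro h
      have h0 : ((s : ℤ) : ZMod p) = 0 := (ZMod.intCast_zmod_eq_zero_iff_dvd _ _).mpr h
      rw [hσcast] at h0
      rw [h0, mul_zero] at hσ
      exact hcbar hσ
    obtain ⟨u, hu, hdvd⟩ := aux_hensel hp hp2 hs hps e he
    set r : ZMod (p ^ e) := ((u : ℤ) : ZMod (p ^ e)) with hrdef
    have hr : r ^ 2 = ((c : ℤ) : ZMod (p ^ e)) := by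
      have : (((u ^ 2 - c : ℤ)) : ZMod (p ^ e)) = 0 := by
        rw [ZMod.intCast_zmod_eq_zero_iff_dvd]
        exact_mod_cast hdvd
      push_cast at this
      rw [hrdef]
      linear_combination this
    have h2' : ¬ (p : ℤ) ∣ 2 := by
      intro h
      have := Int.le_of_dvd (by norm_num) h
      have := hp.two_le
      omega
    have hcop : ∀ {m : ℤ}, ¬ (p : ℤ) ∣ m → IsCoprime m (((p ^ e : ℕ)) : ℤ) := by
      intro m hm
      rw [Nat.cast_pow]
      exact aux_coprime hp hm e
    have hcunit : IsUnit ((c : ℤ) : ZMod (p ^ e)) := aux_isUnit c (hcop hc)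
    have hrunit : IsUnit r := by
      refine isUnit_of_mul_isUnit_left (y := r) ?_
      rw [show r * r = r ^ 2 by ring, hr]
      exact hcunit
    set two : ZMod (p ^ e) := ((2 : ℤ) : ZMod (p ^ e)) with htwodef
    have h2unit : IsUnit two := aux_isUnit 2 (hcop h2')
    have h2runit : IsUnit (two * r) := h2unit.mul hrunit
    have htwo : two = (2 : ZMod (p ^ e)) := by rw [htwodef]; push_cast; ring
    have hne : r ≠ -r := by
      intro h
      have h0 : two * r = 0 := by rw [htwo]; linear_combination h
      exact h2runit.ne_zero h0
    have hset : (Finset.univ.filter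
        (fun u : ZMod (p ^ e) => u ^ 2 = (c : ZMod (p ^ e)))) = {r, -r} := by
      ext u
      simp only [Finset.mem_filter, Finset.mem_univ, true_and, Finset.mem_insert,
        Finset.mem_singleton]
      constructor
      · intro h
        have hmul : (u - r) * (u + r) = 0 := by linear_combination h - hr
        have hπ0 : π (u - r) = 0 ∨ π (u + r) = 0 := by
          have h1 := congrArg π hmul
          rw [map_mul, map_zero] at h1
          exact mul_eq_zero.mp h1
        have hnotboth : ¬ (π (u - r) = 0 ∧ π (u + r) = 0) := by
          rintro ⟨h1, h2⟩
          have h3 : π (two * r) = 0 := by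
            have h4 : two * r = (u + r) - (u - r) := by rw [htwo]; ring
            rw [h4, map_sub, h1, h2, sub_zero]
          exact ((aux_unit_iff hp he' _).mp h2runit) h3
        rcases hπ0 with h1 | h2
        · have hne2 : π (u + r) ≠ 0 := fun hz => hnotboth ⟨h1, hz⟩
          have hun : IsUnit (u + r) := (aux_unit_iff hp he' _).mpr hne2
          left
          exact sub_eq_zero.mp ((hun.mul_left_eq_zero).mp hmul)
        · have hne1 : π (u - r) ≠ 0 := fun hz => hnotboth ⟨hz, h2⟩
          have hun : IsUnit (u - r) := (aux_unit_iff hp he' _).mpr hne1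
          right
          have hmul' : (u + r) * (u - r) = 0 := by linear_combination hmul
          exact eq_neg_of_add_eq_zero_left ((hun.mul_left_eq_zero).mp hmul')
      · rintro (rfl | rfl)
        · exact hr
        · rw [neg_sq]; exact hr
    rw [hset, Finset.card_pair hne]
    norm_num
  · rw [(legendreSym.eq_neg_one_iff p (a := c)).mpr hsq]
    have hempty : (Finset.univ.filter
        (fun u : ZMod (p ^ e) => u ^ 2 = (c : ZMod (p ^ e)))) = ∅ := by
      rw [Finset.eq_empty_iff_forall_notMem]
      intro u hu
      rw [Finset.mem_filter] at hu
      apply hsq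
      refine ⟨π u, ?_⟩
      rw [← hπc, ← hu.2, map_pow]; ring
    rw [hempty]
    simp

lemma aux_lift_mem (q : ℕ) [NeZero q] (z : ZMod q) :
    (if z.val = 0 then q else z.val) ∈ Finset.Icc 1 q := by
  have h1 : z.val < q := ZMod.val_lt z
  have h0 : 1 ≤ q := Nat.one_le_iff_ne_zero.mpr (NeZero.ne q)
  rw [Finset.mem_Icc]
  split <;> omega

lemma aux_lift_cast (q : ℕ) [NeZero q] (z : ZMod q) :
    (((if z.val = 0 then q else z.val) : ℕ) : ZMod q) = z := by
  by_cases h : z.val = 0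
  · rw [if_pos h, ZMod.natCast_self]
    exact ((ZMod.val_eq_zero z).mp h).symm
  · rw [if_neg h]
    exact aux_val_cast z

lemma aux_lift_inv (q : ℕ) [NeZero q] {x : ℕ} (hx : x ∈ Finset.Icc 1 q) :
    (if ((x : ZMod q)).val = 0 then q else ((x : ZMod q)).val) = x := by
  rw [Finset.mem_Icc] at hx
  rw [ZMod.val_natCast]
  rcases Nat.lt_or_ge x q with h | h
  · rw [Nat.mod_eq_of_lt h]
    have : x ≠ 0 := by omega
    simp [this]
  · have hxq : x = q := by omega
    subst hxq
    simp [Nat.mod_self]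

lemma aux_Rcount (α β γ a : ℤ) (q : ℕ) [NeZero q] :
    Rcount α β γ a q = (Finset.univ.filter (fun xy : ZMod q × ZMod q =>
      (α : ZMod q) * xy.1 ^ 2 + (β : ZMod q) * xy.1 * xy.2 + (γ : ZMod q) * xy.2 ^ 2
        = (a : ZMod q))).card := by
  unfold Rcount
  apply Finset.card_nbij'
    (i := fun xy => (((xy.1 : ℕ) : ZMod q), ((xy.2 : ℕ) : ZMod q)))
    (j := fun z => ((if z.1.val = 0 then q else z.1.val), (if z.2.val = 0 then q else z.2.val)))
  · intro xy hxy
    rw [Finset.mem_coe, Finset.mem_filter] at hxy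
    rw [Finset.mem_coe, Finset.mem_filter]
    refine ⟨Finset.mem_univ _, ?_⟩
    have h : ((α * (xy.1 : ℤ) ^ 2 + β * (xy.1 : ℤ) * (xy.2 : ℤ) + γ * (xy.2 : ℤ) ^ 2 : ℤ)
        : ZMod q) = ((a : ℤ) : ZMod q) :=
      (ZMod.intCast_eq_intCast_iff _ _ _).mpr hxy.2
    push_cast at h
    exact h
  · intro z hz
    rw [Finset.mem_coe, Finset.mem_filter] at hz
    rw [Finset.mem_coe, Finset.mem_filter, Finset.mem_product]
    refine ⟨⟨aux_lift_mem q z.1, aux_lift_mem q z.2⟩, ?_⟩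
    dsimp only
    set x1 := if z.1.val = 0 then q else z.1.val with hx1def
    set x2 := if z.2.val = 0 then q else z.2.val with hx2def
    have h1 : ((x1 : ℕ) : ZMod q) = z.1 := aux_lift_cast q z.1
    have h2 : ((x2 : ℕ) : ZMod q) = z.2 := aux_lift_cast q z.2
    refine (ZMod.intCast_eq_intCast_iff _ _ _).mp ?_
    push_cast
    rw [h1, h2]
    exact hz.2
  · intro xy hxy
    rw [Finset.mem_coe, Finset.mem_filter, Finset.mem_product] at hxy
    exact Prod.ext (aux_lift_inv q hxy.1.1) (aux_lift_inv q hxy.1.2)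
  · intro z hz
    exact Prod.ext (aux_lift_cast q z.1) (aux_lift_cast q z.2)

lemma aux_leg_congr {p : ℕ} [Fact p.Prime] {a b : ℤ} (h : (p : ℤ) ∣ b - a) :
    legendreSym p a = legendreSym p b := by
  have hm : a % (p : ℤ) = b % (p : ℤ) := Int.modEq_iff_dvd.mpr h
  rw [legendreSym.mod p a, legendreSym.mod p b, hm]

/-- If `p` is an odd prime dividing `d = β² - 4αγ` with `p ∤ α`, `p ∤ a`, then for
all `e ≥ 1`, `R_a(p^e)/p^e = 1 + (αa/p)`. -/
theorem stmt11 (α β γ a : ℤ) (hprim : Int.gcd (Int.gcd α β) γ = 1)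
    (p : ℕ) (hp : p.Prime) (hp2 : p ≠ 2)
    (hpd : (p : ℤ) ∣ β ^ 2 - 4 * α * γ)
    (hpα : ¬ (p : ℤ) ∣ α) (hpa : ¬ (p : ℤ) ∣ a)
    (e : ℕ) (he : 1 ≤ e) :
    (Rcount α β γ a (p ^ e) : ℝ) / (p : ℝ) ^ e = 1 + (jacobiSym (α * a) p : ℝ) := by
  haveI hpf : Fact p.Prime := ⟨hp⟩
  haveI : NeZero (p ^ e) := ⟨pow_ne_zero e hp.pos.ne'⟩
  have hpp : Prime (p : ℤ) := Nat.prime_iff_prime_int.mp hp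
  have h2' : ¬ (p : ℤ) ∣ 2 := by
    intro h
    have := Int.le_of_dvd (by norm_num) h
    have := hp.two_le
    omega
  have h2α : ¬ (p : ℤ) ∣ 2 * α := fun h => (hpp.dvd_mul.mp h).elim h2' hpα
  have h4α : ¬ (p : ℤ) ∣ 4 * α := by
    intro h
    rw [show (4 * α : ℤ) = 2 * (2 * α) by ring] at h
    exact (hpp.dvd_mul.mp h).elim h2' h2α
  have h4αa : ¬ (p : ℤ) ∣ 4 * α * a := fun h => (hpp.dvd_mul.mp h).elim h4α hpa
  have hαa : ¬ (p : ℤ) ∣ α * a := fun h => (hpp.dvd_mul.mp h).elim hpα hpa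
  have hcop : ∀ {m : ℤ}, ¬ (p : ℤ) ∣ m → IsCoprime m (((p ^ e : ℕ)) : ℤ) := by
    intro m hm
    rw [Nat.cast_pow]
    exact aux_coprime hp hm e
  have h2αu : IsUnit ((2 * α : ℤ) : ZMod (p ^ e)) := aux_isUnit _ (hcop h2α)
  have h4αu : IsUnit ((4 * α : ℤ) : ZMod (p ^ e)) := aux_isUnit _ (hcop h4α)
  obtain ⟨w, hw⟩ := h2αu.exists_right_inv
  push_cast at hw
  -- step B : change of variables
  have hB : (Finset.univ.filter (fun xy : ZMod (p ^ e) × ZMod (p ^ e) =>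
        (α : ZMod (p ^ e)) * xy.1 ^ 2 + (β : ZMod (p ^ e)) * xy.1 * xy.2
          + (γ : ZMod (p ^ e)) * xy.2 ^ 2 = (a : ZMod (p ^ e)))).card
      = (Finset.univ.filter (fun uy : ZMod (p ^ e) × ZMod (p ^ e) =>
        uy.1 ^ 2 = ((4 * α * a : ℤ) : ZMod (p ^ e))
          + ((β ^ 2 - 4 * α * γ : ℤ) : ZMod (p ^ e)) * uy.2 ^ 2)).card := by
    apply Finset.card_nbij'
      (i := fun xy => (((2 * α : ℤ) : ZMod (p ^ e)) * xy.1 + (β : ZMod (p ^ e)) * xy.2, xy.2))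
      (j := fun uy => (w * (uy.1 - (β : ZMod (p ^ e)) * uy.2), uy.2))
    · intro xy hxy
      rw [Finset.mem_coe, Finset.mem_filter] at hxy ⊢
      refine ⟨Finset.mem_univ _, ?_⟩
      have h := hxy.2
      dsimp only
      push_cast at h ⊢
      linear_combination (4 * (α : ZMod (p ^ e))) * h
    · intro uy huy
      rw [Finset.mem_coe, Finset.mem_filter] at huy ⊢
      refine ⟨Finset.mem_univ _, ?_⟩
      have h := huy.2
      dsimp only
      apply h4αu.mul_left_cancel
      push_cast at h ⊢
      linear_combination (2 * (α : ZMod (p ^ e)) * (w * (uy.1 - (β : ZMod (p ^ e)) * uy.2))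
          + (β : ZMod (p ^ e)) * uy.2 + uy.1) * ((uy.1 - (β : ZMod (p ^ e)) * uy.2) * hw) + h
    · intro xy hxy
      refine Prod.ext ?_ rfl
      dsimp only
      push_cast
      linear_combination xy.1 * hw
    · intro uy huy
      refine Prod.ext ?_ rfl
      dsimp only
      push_cast
      linear_combination (uy.1 - (β : ZMod (p ^ e)) * uy.2) * hw
  -- step C : fiberwise count
  have hy : ∀ y : ZMod (p ^ e),
      ((Finset.univ.filter (fun u : ZMod (p ^ e) => u ^ 2 = ((4 * α * a : ℤ) : ZMod (p ^ e))
        + ((β ^ 2 - 4 * α * γ : ℤ) : ZMod (p ^ e)) * y ^ 2)).card : ℤ)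
      = 1 + legendreSym p (α * a) := by
    intro y
    set cy : ℤ := 4 * α * a + (β ^ 2 - 4 * α * γ) * ((y.val : ℕ) : ℤ) ^ 2 with hcydef
    have hcast : ((4 * α * a : ℤ) : ZMod (p ^ e))
        + ((β ^ 2 - 4 * α * γ : ℤ) : ZMod (p ^ e)) * y ^ 2 = ((cy : ℤ) : ZMod (p ^ e)) := by
      rw [hcydef]
      have hyv : ((y.val : ℕ) : ZMod (p ^ e)) = y := aux_val_cast y
      push_cast
      rw [hyv]
    have hpcy : ¬ (p : ℤ) ∣ cy := by
      intro h
      apply h4αa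
      have hd : (p : ℤ) ∣ (β ^ 2 - 4 * α * γ) * ((y.val : ℕ) : ℤ) ^ 2 := hpd.mul_right _
      have h5 := dvd_sub h hd
      rw [hcydef] at h5
      simpa using h5
    rw [hcast, aux_sqcount hp2 he hpcy]
    congr 1
    have h1 : legendreSym p cy = legendreSym p (4 * α * a) := by
      apply aux_leg_congr
      rw [hcydef]
      rw [show 4 * α * a - (4 * α * a + (β ^ 2 - 4 * α * γ) * ((y.val : ℕ) : ℤ) ^ 2)
        = -((β ^ 2 - 4 * α * γ) * ((y.val : ℕ) : ℤ) ^ 2) by ring]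
      exact (hpd.mul_right _).neg_right
    have h22 : ((2 : ℤ) : ZMod p) ≠ 0 := by
      rw [Ne, ZMod.intCast_zmod_eq_zero_iff_dvd]
      exact h2'
    have h2 : legendreSym p (4 * α * a) = legendreSym p (α * a) := by
      rw [show (4 * α * a : ℤ) = 2 ^ 2 * (α * a) by ring, legendreSym.mul,
        legendreSym.sq_one' p h22, one_mul]
    rw [h1, h2]
  have hfib : ((Finset.univ.filter (fun uy : ZMod (p ^ e) × ZMod (p ^ e) =>
      uy.1 ^ 2 = ((4 * α * a : ℤ) : ZMod (p ^ e))
        + ((β ^ 2 - 4 * α * γ : ℤ) : ZMod (p ^ e)) * uy.2 ^ 2)).card : ℤ)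
      = (p ^ e : ℤ) * (1 + legendreSym p (α * a)) := by
    have hyy : ∀ y : ZMod (p ^ e),
        (((Finset.univ.filter (fun uy : ZMod (p ^ e) × ZMod (p ^ e) =>
          uy.1 ^ 2 = ((4 * α * a : ℤ) : ZMod (p ^ e))
            + ((β ^ 2 - 4 * α * γ : ℤ) : ZMod (p ^ e)) * uy.2 ^ 2)).filter
              (fun uy => uy.2 = y)).card : ℤ)
        = 1 + legendreSym p (α * a) := by
      intro y
      rw [← hy y]
      congr 1
      apply Finset.card_nbij' (i := Prod.fst) (j := fun u => (u, y))
      · intro uy huy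
        simp only [Finset.mem_coe, Finset.mem_filter, Finset.mem_univ, true_and] at huy
        obtain ⟨h1, h2⟩ := huy
        rw [h2] at h1
        simp only [Finset.mem_coe, Finset.mem_filter, Finset.mem_univ, true_and]
        exact h1
      · intro u hu
        simp only [Finset.mem_coe, Finset.mem_filter, Finset.mem_univ, true_and] at hu
        exact Finset.mem_filter.mpr ⟨Finset.mem_filter.mpr ⟨Finset.mem_univ _, hu⟩, rfl⟩
      · intro uy huy
        simp only [Finset.mem_coe, Finset.mem_filter, Finset.mem_univ, true_and] at huy
        obtain ⟨h1, h2⟩ := huy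
        rw [← h2]
      · intro u hu
        rfl
    calc ((Finset.univ.filter (fun uy : ZMod (p ^ e) × ZMod (p ^ e) =>
          uy.1 ^ 2 = ((4 * α * a : ℤ) : ZMod (p ^ e))
            + ((β ^ 2 - 4 * α * γ : ℤ) : ZMod (p ^ e)) * uy.2 ^ 2)).card : ℤ)
        = ∑ y : ZMod (p ^ e), (((Finset.univ.filter (fun uy : ZMod (p ^ e) × ZMod (p ^ e) =>
            uy.1 ^ 2 = ((4 * α * a : ℤ) : ZMod (p ^ e))
              + ((β ^ 2 - 4 * α * γ : ℤ) : ZMod (p ^ e)) * uy.2 ^ 2)).filter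
                (fun uy => uy.2 = y)).card : ℤ) := by
          rw [Finset.card_eq_sum_card_fiberwise (f := Prod.snd) (t := Finset.univ)
            (fun x _ => Finset.mem_univ _)]
          push_cast
          rfl
      _ = ∑ _y : ZMod (p ^ e), (1 + legendreSym p (α * a)) :=
          Finset.sum_congr rfl (fun y _ => hyy y)
      _ = (p ^ e : ℤ) * (1 + legendreSym p (α * a)) := by
          rw [Finset.sum_const, Finset.card_univ, ZMod.card, nsmul_eq_mul]
          push_cast
          ring
  -- assemble
  have hfinal : (Rcount α β γ a (p ^ e) : ℤ) = (p ^ e : ℤ) * (1 + legendreSym p (α * a)) := by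
    rw [aux_Rcount α β γ a (p ^ e), hB]
    exact hfib
  rw [jacobiSym.legendreSym.to_jacobiSym p (α * a)] at hfinal
  have hR : (Rcount α β γ a (p ^ e) : ℝ) = (p : ℝ) ^ e * (1 + (jacobiSym (α * a) p : ℝ)) := by
    exact_mod_cast hfinal
  rw [hR]
  have hpe : ((p : ℝ)) ^ e ≠ 0 := pow_ne_zero e (by exact_mod_cast hp.pos.ne')
  field_simp
end

section
/- Let Q(x,y) = αx² + βxy + γy² with β odd and a odd. Then for all e ≥ 1, R_a(2^e)/2^e = R_a(2)/2; moreover R_a(2) = 1 if 2 | αγ and R_a(2) = 3 if α, β, γ are all odd. -/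
lemma zcount2 : ∀ K X Y : ZMod 2, (X = 1 ∨ Y = 1) →
    ((({(0,0),(0,1),(1,0),(1,1)} : Finset (ℕ × ℕ))).filter
      (fun st => K + (Y * (st.1 : ZMod 2) + X * (st.2 : ZMod 2)) = 0)).card = 2 := by
  decide

lemma odd_cast (b : ℤ) (hb : b % 2 = 1) : (b : ZMod 2) = 1 := by
  have : ((b : ℤ) : ZMod 2) = ((1 : ℤ) : ZMod 2) := by
    rw [ZMod.intCast_eq_intCast_iff']
    simpa using hb
  simpa using this

lemma double (α β γ a : ℤ) (hβ : β % 2 = 1) (ha : a % 2 = 1)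
    (q q' : ℕ) (hq : q = 2 * q') (hq0 : 0 < q) :
    Rcount α β γ a (2 * q) = 2 * Rcount α β γ a q := by
  classical
  have hqZ : (q : ℤ) ≠ 0 := by exact_mod_cast hq0.ne'
  set D : Finset ((ℕ × ℕ) × (ℕ × ℕ)) :=
    ((Finset.Icc 1 q ×ˢ Finset.Icc 1 q) ×ˢ (({0,1} : Finset ℕ) ×ˢ ({0,1} : Finset ℕ))).filter
      (fun z => (α * ((z.1.1 + q * z.2.1 : ℕ) : ℤ) ^ 2
          + β * ((z.1.1 + q * z.2.1 : ℕ) : ℤ) * ((z.1.2 + q * z.2.2 : ℕ) : ℤ)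
          + γ * ((z.1.2 + q * z.2.2 : ℕ) : ℤ) ^ 2) % ((2 * q : ℕ) : ℤ)
        = a % ((2 * q : ℕ) : ℤ)) with hD
  have step1 : Rcount α β γ a (2 * q) = D.card := by
    rw [Rcount]
    apply Finset.card_nbij'
      (i := fun p => ((if p.1 ≤ q then p.1 else p.1 - q, if p.2 ≤ q then p.2 else p.2 - q),
        (if p.1 ≤ q then 0 else 1, if p.2 ≤ q then 0 else 1)))
      (j := fun z => (z.1.1 + q * z.2.1, z.1.2 + q * z.2.2))
    · intro p hp
      simp only [Finset.mem_coe, Finset.mem_filter, Finset.mem_product, Finset.mem_Icc] at hp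
      have e1 : (if p.1 ≤ q then p.1 else p.1 - q) + q * (if p.1 ≤ q then 0 else 1) = p.1 := by
        split_ifs <;> omega
      have e2 : (if p.2 ≤ q then p.2 else p.2 - q) + q * (if p.2 ≤ q then 0 else 1) = p.2 := by
        split_ifs <;> omega
      simp only [Finset.mem_coe, hD, Finset.mem_filter, Finset.mem_product, Finset.mem_insert,
        Finset.mem_singleton, Finset.mem_Icc, e1, e2]
      refine ⟨⟨⟨?_, ?_⟩, ?_, ?_⟩, hp.2⟩ <;> split_ifs <;> omega
    · intro z hz
      obtain ⟨⟨x, y⟩, s, t⟩ := z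
      simp only [Finset.mem_coe, hD, Finset.mem_filter, Finset.mem_product, Finset.mem_insert,
        Finset.mem_singleton, Finset.mem_Icc] at hz
      obtain ⟨⟨⟨hx1, hx2⟩, hs, ht⟩, hcond⟩ := hz
      simp only [Finset.mem_coe, Finset.mem_filter, Finset.mem_product, Finset.mem_Icc]
      rcases hs with hs | hs <;> rcases ht with ht | ht <;> subst hs <;> subst ht <;>
        exact ⟨⟨by omega, by omega⟩, hcond⟩
    · intro p hp
      simp only [Finset.mem_coe, Finset.mem_filter, Finset.mem_product, Finset.mem_Icc] at hp
      have e1 : (if p.1 ≤ q then p.1 else p.1 - q) + q * (if p.1 ≤ q then 0 else 1) = p.1 := by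
        split_ifs <;> omega
      have e2 : (if p.2 ≤ q then p.2 else p.2 - q) + q * (if p.2 ≤ q then 0 else 1) = p.2 := by
        split_ifs <;> omega
      exact Prod.ext e1 e2
    · intro z hz
      obtain ⟨⟨x, y⟩, s, t⟩ := z
      simp only [Finset.mem_coe, hD, Finset.mem_filter, Finset.mem_product, Finset.mem_insert,
        Finset.mem_singleton, Finset.mem_Icc] at hz
      obtain ⟨⟨⟨hx1, hx2⟩, hs, ht⟩, hcond⟩ := hz
      rcases hs with hs | hs <;> rcases ht with ht | ht <;> subst hs <;> subst ht <;>
        · ext <;> simp only <;> split_ifs <;> omega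
  rw [step1, Rcount]
  set T : Finset (ℕ × ℕ) :=
    ((Finset.Icc 1 q ×ˢ Finset.Icc 1 q).filter
      (fun xy => (α * (xy.1 : ℤ) ^ 2 + β * (xy.1 : ℤ) * (xy.2 : ℤ) + γ * (xy.2 : ℤ) ^ 2) % (q : ℤ)
        = a % (q : ℤ))) with hT
  have hmaps : ∀ z ∈ D, z.1 ∈ T := by
    rintro ⟨⟨x, y⟩, s, t⟩ hz
    simp only [hD, Finset.mem_filter, Finset.mem_product, Finset.mem_insert,
      Finset.mem_singleton, Finset.mem_Icc] at hz
    obtain ⟨⟨⟨hx, hy⟩, hs, ht⟩, hcond⟩ := hz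
    simp only [hT, Finset.mem_filter, Finset.mem_product, Finset.mem_Icc]
    refine ⟨⟨hx, hy⟩, ?_⟩
    have hm : ((α * ((x + q * s : ℕ) : ℤ) ^ 2
        + β * ((x + q * s : ℕ) : ℤ) * ((y + q * t : ℕ) : ℤ)
        + γ * ((y + q * t : ℕ) : ℤ) ^ 2) : ℤ) ≡ a [ZMOD ((2 * q : ℕ) : ℤ)] := hcond
    have hm1 : ((α * ((x + q * s : ℕ) : ℤ) ^ 2
        + β * ((x + q * s : ℕ) : ℤ) * ((y + q * t : ℕ) : ℤ)
        + γ * ((y + q * t : ℕ) : ℤ) ^ 2) : ℤ) ≡ a [ZMOD (q : ℤ)] :=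
      hm.of_dvd ⟨2, by push_cast; ring⟩
    have hm2 : ((α * ((x + q * s : ℕ) : ℤ) ^ 2
        + β * ((x + q * s : ℕ) : ℤ) * ((y + q * t : ℕ) : ℤ)
        + γ * ((y + q * t : ℕ) : ℤ) ^ 2) : ℤ)
        ≡ (α * (x : ℤ) ^ 2 + β * (x : ℤ) * (y : ℤ) + γ * (y : ℤ) ^ 2) [ZMOD (q : ℤ)] :=
      (Int.modEq_iff_dvd.mpr ⟨(2 * α * x * s + α * q * s ^ 2 + β * x * t + β * y * s
        + β * q * s * t + 2 * γ * y * t + γ * q * t ^ 2), by push_cast; ring⟩).symm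
    exact hm2.symm.trans hm1
  have hfib : ∀ p ∈ T, (D.filter (fun z => z.1 = p)).card = 2 := by
    rintro ⟨x, y⟩ hp
    simp only [hT, Finset.mem_filter, Finset.mem_product, Finset.mem_Icc] at hp
    obtain ⟨⟨hx, hy⟩, hcond⟩ := hp
    -- transfer to a count over (s,t)
    have hcard : (D.filter (fun z => z.1 = (x, y))).card
        = ((({0,1} : Finset ℕ) ×ˢ ({0,1} : Finset ℕ)).filter
          (fun st => (α * ((x + q * st.1 : ℕ) : ℤ) ^ 2
            + β * ((x + q * st.1 : ℕ) : ℤ) * ((y + q * st.2 : ℕ) : ℤ)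
            + γ * ((y + q * st.2 : ℕ) : ℤ) ^ 2) % ((2 * q : ℕ) : ℤ)
            = a % ((2 * q : ℕ) : ℤ))).card := by
      apply Finset.card_nbij' (i := fun z => z.2) (j := fun st => ((x, y), st))
      · intro z hz
        obtain ⟨⟨x', y'⟩, s, t⟩ := z
        simp only [Finset.mem_coe, hD, Finset.mem_filter, Finset.mem_product, Finset.mem_insert,
          Finset.mem_singleton, Finset.mem_Icc, Prod.mk.injEq] at hz ⊢
        obtain ⟨⟨⟨_, hst⟩, hc⟩, hx', hy'⟩ := hz
        subst hx'; subst hy'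
        exact ⟨hst, hc⟩
      · intro st hst
        obtain ⟨s, t⟩ := st
        simp only [Finset.mem_coe, Finset.mem_filter, Finset.mem_product, Finset.mem_insert,
          Finset.mem_singleton] at hst
        simp only [Finset.mem_coe, hD, Finset.mem_filter, Finset.mem_product, Finset.mem_insert,
          Finset.mem_singleton, Finset.mem_Icc]
        exact ⟨⟨⟨⟨⟨hx.1, hx.2⟩, hy.1, hy.2⟩, hst.1⟩, hst.2⟩, trivial⟩
      · intro z hz
        obtain ⟨⟨x', y'⟩, s, t⟩ := z
        simp only [Finset.mem_coe, Finset.mem_filter] at hz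
        rw [hz.2]
      · rintro ⟨s, t⟩ _
        rfl
    rw [hcard]
    -- now the parity count
    obtain ⟨k, hk⟩ : (q : ℤ) ∣ (α * (x : ℤ) ^ 2 + β * (x : ℤ) * (y : ℤ) + γ * (y : ℤ) ^ 2) - a :=
      Int.ModEq.dvd (Int.ModEq.symm hcond)
    have hQodd : (α * (x : ℤ) ^ 2 + β * (x : ℤ) * (y : ℤ) + γ * (y : ℤ) ^ 2) % 2 = 1 := by
      have h2 : (2 : ℤ) ∣ (α * (x : ℤ) ^ 2 + β * (x : ℤ) * (y : ℤ) + γ * (y : ℤ) ^ 2) - a :=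
        dvd_trans ⟨(q' : ℤ), by push_cast [hq]; ring⟩ ⟨k, hk⟩
      omega
    have hxy2 : (x : ℤ) % 2 = 1 ∨ (y : ℤ) % 2 = 1 := by
      by_contra hcon
      push_neg at hcon
      obtain ⟨u, hu⟩ : (2 : ℤ) ∣ (x : ℤ) := by omega
      obtain ⟨v, hv⟩ : (2 : ℤ) ∣ (y : ℤ) := by omega
      have : (α * (x : ℤ) ^ 2 + β * (x : ℤ) * (y : ℤ) + γ * (y : ℤ) ^ 2)
          = 2 * (2 * α * u ^ 2 + 2 * β * u * v + 2 * γ * v ^ 2) := by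
        rw [hu, hv]; ring
      omega
    have key : ∀ s t : ℕ, ((α * ((x + q * s : ℕ) : ℤ) ^ 2
        + β * ((x + q * s : ℕ) : ℤ) * ((y + q * t : ℕ) : ℤ)
        + γ * ((y + q * t : ℕ) : ℤ) ^ 2) % ((2 * q : ℕ) : ℤ) = a % ((2 * q : ℕ) : ℤ))
        ↔ ((k : ZMod 2) + ((y : ZMod 2) * (s : ZMod 2) + (x : ZMod 2) * (t : ZMod 2)) = 0) := by
      intro s t
      have hsplit : (α * ((x + q * s : ℕ) : ℤ) ^ 2
          + β * ((x + q * s : ℕ) : ℤ) * ((y + q * t : ℕ) : ℤ)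
          + γ * ((y + q * t : ℕ) : ℤ) ^ 2) - a
          = (q : ℤ) * (k + β * ((y : ℤ) * s + (x : ℤ) * t))
            + (2 * q) * (α * x * s + γ * y * t + q' * (α * s ^ 2 + β * s * t + γ * t ^ 2)) := by
        have e : (α * ((x + q * s : ℕ) : ℤ) ^ 2
            + β * ((x + q * s : ℕ) : ℤ) * ((y + q * t : ℕ) : ℤ)
            + γ * ((y + q * t : ℕ) : ℤ) ^ 2) - a
            = ((α * (x : ℤ) ^ 2 + β * (x : ℤ) * (y : ℤ) + γ * (y : ℤ) ^ 2) - a)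
              + (q : ℤ) * (β * ((y : ℤ) * s + (x : ℤ) * t))
              + (2 * q) * (α * x * s + γ * y * t
                + q' * (α * s ^ 2 + β * s * t + γ * t ^ 2)) := by
          push_cast [hq]; ring
        rw [e, hk]; ring
      have c1 : ((α * ((x + q * s : ℕ) : ℤ) ^ 2
          + β * ((x + q * s : ℕ) : ℤ) * ((y + q * t : ℕ) : ℤ)
          + γ * ((y + q * t : ℕ) : ℤ) ^ 2) % ((2 * q : ℕ) : ℤ) = a % ((2 * q : ℕ) : ℤ))
          ↔ ((2 * q : ℕ) : ℤ) ∣ ((α * ((x + q * s : ℕ) : ℤ) ^ 2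
            + β * ((x + q * s : ℕ) : ℤ) * ((y + q * t : ℕ) : ℤ)
            + γ * ((y + q * t : ℕ) : ℤ) ^ 2) - a) :=
        Iff.trans Int.modEq_iff_dvd dvd_sub_comm
      rw [c1, hsplit]
      rw [show ((2 * q : ℕ) : ℤ) = 2 * (q : ℤ) by push_cast; ring]
      rw [dvd_add_left (dvd_mul_right _ _)]
      rw [show (2 * (q : ℤ)) = (q : ℤ) * 2 by ring]
      rw [mul_dvd_mul_iff_left hqZ]
      rw [show (2 : ℤ) = ((2 : ℕ) : ℤ) by norm_num, ← ZMod.intCast_zmod_eq_zero_iff_dvd]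
      push_cast
      rw [odd_cast β hβ, one_mul]
    have hset : (({0,1} : Finset ℕ) ×ˢ ({0,1} : Finset ℕ))
        = ({(0,0),(0,1),(1,0),(1,1)} : Finset (ℕ × ℕ)) := by decide
    rw [Finset.filter_congr (fun st _ => key st.1 st.2), hset]
    apply zcount2
    refine hxy2.imp (fun h => ?_) (fun h => ?_)
    · have := odd_cast (x : ℤ) h; simpa using this
    · have := odd_cast (y : ℤ) h; simpa using this
  rw [Finset.card_eq_sum_card_fiberwise hmaps, Finset.sum_congr rfl hfib,
    Finset.sum_const, smul_eq_mul, mul_comm]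


lemma zcount1 : ∀ A B C D : ZMod 2, B = 1 → D = 1 → (A = 0 ∨ C = 0) →
    ((({(1,1),(1,2),(2,1),(2,2)} : Finset (ℕ × ℕ))).filter
      (fun p => A * (p.1 : ZMod 2) ^ 2 + B * (p.1 : ZMod 2) * (p.2 : ZMod 2)
        + C * (p.2 : ZMod 2) ^ 2 = D)).card = 1 := by
  decide

lemma zcount3 : ∀ A B C D : ZMod 2, A = 1 → B = 1 → C = 1 → D = 1 →
    ((({(1,1),(1,2),(2,1),(2,2)} : Finset (ℕ × ℕ))).filter
      (fun p => A * (p.1 : ZMod 2) ^ 2 + B * (p.1 : ZMod 2) * (p.2 : ZMod 2)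
        + C * (p.2 : ZMod 2) ^ 2 = D)).card = 3 := by
  decide

lemma cond_iff (α β γ a : ℤ) (q : ℕ) (x y : ℕ) :
    ((α * (x : ℤ) ^ 2 + β * (x : ℤ) * (y : ℤ) + γ * (y : ℤ) ^ 2) % (q : ℤ) = a % (q : ℤ)) ↔
    ((α : ZMod q) * (x : ZMod q) ^ 2 + (β : ZMod q) * (x : ZMod q) * (y : ZMod q)
      + (γ : ZMod q) * (y : ZMod q) ^ 2 = (a : ZMod q)) := by
  rw [← ZMod.intCast_eq_intCast_iff']
  push_cast
  rfl

lemma base2 (α β γ a : ℤ) :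
    Rcount α β γ a 2 = ((({(1,1),(1,2),(2,1),(2,2)} : Finset (ℕ × ℕ))).filter
      (fun p => (α : ZMod 2) * (p.1 : ZMod 2) ^ 2 + (β : ZMod 2) * (p.1 : ZMod 2) * (p.2 : ZMod 2)
        + (γ : ZMod 2) * (p.2 : ZMod 2) ^ 2 = (a : ZMod 2))).card := by
  rw [Rcount]
  have hset : (Finset.Icc 1 2 ×ˢ Finset.Icc 1 2 : Finset (ℕ × ℕ))
      = {(1,1),(1,2),(2,1),(2,2)} := by decide
  rw [hset, Finset.filter_congr (fun p _ => cond_iff α β γ a 2 p.1 p.2)]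

lemma pow_step (α β γ a : ℤ) (hβ : β % 2 = 1) (ha : a % 2 = 1) :
    ∀ e : ℕ, 1 ≤ e → Rcount α β γ a (2 ^ e) = 2 ^ (e - 1) * Rcount α β γ a 2 := by
  intro e he
  induction e with
  | zero => omega
  | succ n ih =>
    rcases Nat.eq_or_lt_of_le he with h1 | h1
    · simp [← h1]
    · have hn : 1 ≤ n := by omega
      have h2 : (2 : ℕ) ^ (n + 1) = 2 * 2 ^ n := by ring
      rw [h2, double α β γ a hβ ha (2 ^ n) (2 ^ (n - 1))
        (by rw [← pow_succ']; congr 1; omega) (by positivity), ih hn]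
      rw [show n + 1 - 1 = (n - 1) + 1 by omega, pow_succ']
      ring

/-- For `β` odd and `a` odd: `R_a(2^e)/2^e = R_a(2)/2` for every `e ≥ 1`; moreover
`R_a(2) = 1` if `2 ∣ αγ`, and `R_a(2) = 3` if `α, β, γ` are all odd. -/
theorem stmt12 (α β γ a : ℤ) (hβ : Odd β) (ha : Odd a) :
    (∀ e : ℕ, 1 ≤ e →
      (Rcount α β γ a (2 ^ e) : ℝ) / (2 : ℝ) ^ e = (Rcount α β γ a 2 : ℝ) / 2) ∧
    (2 ∣ α * γ → Rcount α β γ a 2 = 1) ∧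
    (Odd α ∧ Odd γ → Rcount α β γ a 2 = 3) := by
  have hβ2 : β % 2 = 1 := Int.odd_iff.mp hβ
  have ha2 : a % 2 = 1 := Int.odd_iff.mp ha
  refine ⟨?_, ?_, ?_⟩
  · intro e he
    obtain ⟨f, rfl⟩ : ∃ f, e = f + 1 := ⟨e - 1, by omega⟩
    have h1 : (Rcount α β γ a (2 ^ (f + 1)) : ℝ) = 2 ^ f * Rcount α β γ a 2 := by
      rw [pow_step α β γ a hβ2 ha2 (f + 1) (by omega)]
      push_cast [Nat.add_sub_cancel]
      ring
    rw [h1, pow_succ]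
    have h2 : (2 : ℝ) ^ f ≠ 0 := by positivity
    field_simp
  · intro h
    have hαγ : (α : ZMod 2) = 0 ∨ (γ : ZMod 2) = 0 := by
      have : ((α * γ : ℤ) : ZMod 2) = 0 :=
        (ZMod.intCast_zmod_eq_zero_iff_dvd _ 2).mpr (by exact_mod_cast h)
      push_cast at this
      exact mul_eq_zero.mp this
    rw [base2]
    exact zcount1 _ _ _ _ (odd_cast β hβ2) (odd_cast a ha2) hαγ
  · rintro ⟨hα, hγ⟩
    rw [base2]
    exact zcount3 _ _ _ _ (odd_cast α (Int.odd_iff.mp hα)) (odd_cast β hβ2)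
      (odd_cast γ (Int.odd_iff.mp hγ)) (odd_cast a ha2)
end

section
/- Define the multiplicative function h on prime powers by h(p^e) = 1/p if p ≡ 3 mod 4 and e odd, and h(p^e) = 1 otherwise. Then for the indicator a(n) of sums of two squares, A_d(x) := Σ_{n ≤ x, d | n} a(n) satisfies A_d(x) = A(h(d)x/d), i.e. counting n ≤ x divisible by d that are sums of two squares is the same as counting m ≤ h(d)x/d that are sums of two squares. -/
open Classical in
/-- `A(x)`: the number of `1 ≤ n ≤ x` expressible as a sum of two squares. -/
noncomputable def A16 (x : ℝ) : ℕ :=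
  ((Finset.Icc 1 ⌊x⌋₊).filter (fun n => ∃ u v : ℕ, n = u ^ 2 + v ^ 2)).card

open Classical in
/-- `A_d(x)`: the number of `1 ≤ n ≤ x` divisible by `d` and expressible as a sum
of two squares. -/
noncomputable def A16d (d : ℕ) (x : ℝ) : ℕ :=
  ((Finset.Icc 1 ⌊x⌋₊).filter (fun n => d ∣ n ∧ ∃ u v : ℕ, n = u ^ 2 + v ^ 2)).card

/-- The multiplicative function `h` with `h(p^e) = 1/p` if `p ≡ 3 (mod 4)` and `e`
odd, `h(p^e) = 1` otherwise. -/
noncomputable def h16 (d : ℕ) : ℝ :=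
  ∏ p ∈ d.primeFactors,
    if p % 4 = 3 ∧ Odd (d.factorization p) then ((p : ℝ))⁻¹ else 1

lemma sq2_iff16 {n : ℕ} :
    (∃ u v : ℕ, n = u ^ 2 + v ^ 2) ↔
      ∀ q : ℕ, q.Prime → q % 4 = 3 → Even (n.factorization q) := by
  rw [Nat.eq_sq_add_sq_iff]
  constructor
  · intro H q hq h3
    by_cases hqn : q ∈ n.primeFactors
    · rw [Nat.factorization_def _ hq]
      exact H q hqn h3
    · rw [Finsupp.notMem_support_iff.mp (by rwa [Nat.support_factorization])]
      exact Even.zero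
  · intro H q hq h3
    have := H q (Nat.prime_of_mem_primeFactors hq) h3
    rwa [Nat.factorization_def _ (Nat.prime_of_mem_primeFactors hq)] at this

/-- `A_d(x) = A(h(d) x / d)` for the sums-of-two-squares sequence. -/
theorem stmt16 (d : ℕ) (hd : 0 < d) (x : ℝ) :
    A16d d x = A16 (h16 d * x / d) := by
  classical
  set s : Finset ℕ := d.primeFactors.filter
      (fun p => p % 4 = 3 ∧ Odd (d.factorization p)) with hs
  set k : ℕ := ∏ p ∈ s, p with hkdef
  have hkprime : ∀ p ∈ s, p.Prime := fun p hp =>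
    Nat.prime_of_mem_primeFactors (Finset.mem_filter.mp hp).1
  have hk0 : 0 < k := Finset.prod_pos fun p hp => (hkprime p hp).pos
  set D : ℕ := d * k with hDdef
  have hD0 : 0 < D := Nat.mul_pos hd hk0
  have hDR : (0:ℝ) < (D:ℝ) := by exact_mod_cast hD0
  -- h16 d = (k:ℝ)⁻¹
  have hh : h16 d = (k : ℝ)⁻¹ := by
    have h1 : h16 d = ∏ p ∈ s, ((p:ℝ))⁻¹ := (Finset.prod_filter _ _).symm
    rw [h1, hkdef, Nat.cast_prod, ← Finset.prod_inv_distrib]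
  -- the argument simplifies
  have harg : h16 d * x / (d:ℝ) = x / (D:ℝ) := by
    have hdR : ((d:ℝ)) ≠ 0 := by exact_mod_cast hd.ne'
    have hkR : ((k:ℝ)) ≠ 0 := by exact_mod_cast hk0.ne'
    rw [hh, inv_mul_eq_div, div_div, hDdef]
    push_cast
    rw [mul_comm]
  -- factorization of k
  have hkfact : ∀ q : ℕ, k.factorization q = if q ∈ s then 1 else 0 := by
    intro q
    rw [hkdef, Nat.factorization_prod (fun p hp => (hkprime p hp).pos.ne')]
    rw [Finset.sum_apply']
    have : ∀ p ∈ s, (Nat.factorization p) q = if p = q then 1 else 0 := by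
      intro p hp
      rw [(hkprime p hp).factorization, Finsupp.single_apply]
    rw [Finset.sum_congr rfl this, Finset.sum_ite_eq' s q (fun _ => 1)]
  -- D has even exponents at primes ≡ 3 mod 4
  have hDeven : ∀ q : ℕ, q.Prime → q % 4 = 3 → Even (D.factorization q) := by
    intro q hq h3
    rw [hDdef, Nat.factorization_mul hd.ne' hk0.ne', Finsupp.add_apply, hkfact q]
    by_cases ho : Odd (d.factorization q)
    · have hqs : q ∈ s := by
        refine Finset.mem_filter.mpr ⟨Nat.mem_primeFactors.mpr ⟨hq, ?_, hd.ne'⟩, h3, ho⟩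
        exact Nat.dvd_of_factorization_pos ho.pos.ne'
      rw [if_pos hqs]
      exact Nat.even_add_one.mpr (Nat.not_even_iff_odd.mpr ho)
    · have hqs : q ∉ s := fun h => ho (Finset.mem_filter.mp h).2.2
      rw [if_neg hqs, add_zero]
      exact Nat.not_odd_iff_even.mp ho
  -- divisibility upgrade
  have hdvd : ∀ n : ℕ, 0 < n → (∃ u v : ℕ, n = u ^ 2 + v ^ 2) →
      (d ∣ n ↔ D ∣ n) := by
    intro n hn hS
    constructor
    · intro hdn
      rw [← Nat.factorization_le_iff_dvd hD0.ne' hn.ne']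
      intro q
      by_cases hq : q.Prime
      · rw [hDdef, Nat.factorization_mul hd.ne' hk0.ne', Finsupp.add_apply, hkfact q]
        have hle : d.factorization q ≤ n.factorization q :=
          (Nat.factorization_le_iff_dvd hd.ne' hn.ne').mpr hdn q
        by_cases hqs : q ∈ s
        · obtain ⟨-, h3, ho⟩ := Finset.mem_filter.mp hqs
          have hne : Even (n.factorization q) := sq2_iff16.mp hS q hq h3
          have : d.factorization q ≠ n.factorization q := by
            intro h; rw [h] at ho; exact (Nat.not_odd_iff_even.mpr hne) ho
          rw [if_pos hqs]
          omega
        · rw [if_neg hqs, add_zero]; exact hle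
      · rw [Nat.factorization_eq_zero_of_not_prime _ hq]
        exact Nat.zero_le _
    · intro hDn
      exact dvd_trans (Dvd.intro k rfl) hDn
  -- S2S is stable under multiplying/dividing by D
  have hSmul : ∀ m : ℕ, 0 < m →
      ((∃ u v : ℕ, D * m = u ^ 2 + v ^ 2) ↔ (∃ u v : ℕ, m = u ^ 2 + v ^ 2)) := by
    intro m hm
    rw [sq2_iff16, sq2_iff16]
    have key : ∀ q : ℕ, q.Prime → q % 4 = 3 →
        (Even ((D * m).factorization q) ↔ Even (m.factorization q)) := by
      intro q hq h3
      rw [Nat.factorization_mul hD0.ne' hm.ne', Finsupp.add_apply, Nat.even_add]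
      simp [hDeven q hq h3]
    exact ⟨fun H q hq h3 => (key q hq h3).mp (H q hq h3),
      fun H q hq h3 => (key q hq h3).mpr (H q hq h3)⟩
  rw [A16d, A16, harg]
  have hfeq : ((Finset.Icc 1 ⌊x⌋₊).filter (fun n => d ∣ n ∧ ∃ u v : ℕ, n = u ^ 2 + v ^ 2))
      = ((Finset.Icc 1 ⌊x⌋₊).filter (fun n => D ∣ n ∧ ∃ u v : ℕ, n = u ^ 2 + v ^ 2)) := by
    apply Finset.filter_congr
    intro n hn
    have hn1 : 0 < n := (Finset.mem_Icc.mp hn).1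
    constructor
    · rintro ⟨h1, h2⟩; exact ⟨(hdvd n hn1 h2).mp h1, h2⟩
    · rintro ⟨h1, h2⟩; exact ⟨(hdvd n hn1 h2).mpr h1, h2⟩
  rw [hfeq]
  symm
  apply Finset.card_bij (fun m _ => D * m)
  · intro m hm
    obtain ⟨hmIcc, hmS⟩ := Finset.mem_filter.mp hm
    obtain ⟨hm1, hm2⟩ := Finset.mem_Icc.mp hmIcc
    have hm0 : 0 < m := hm1
    have hfl : 0 < ⌊x / (D:ℝ)⌋₊ := lt_of_lt_of_le hm1 hm2
    have hxD : (1:ℝ) ≤ x / (D:ℝ) := Nat.floor_pos.mp hfl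
    have hmle : (m:ℝ) ≤ x / (D:ℝ) := by
      calc (m:ℝ) ≤ (⌊x / (D:ℝ)⌋₊ : ℝ) := by exact_mod_cast hm2
        _ ≤ x / (D:ℝ) := Nat.floor_le (le_trans zero_le_one hxD)
    have hDmx : ((D * m : ℕ) : ℝ) ≤ x := by
      push_cast
      calc (D:ℝ) * m = (m:ℝ) * D := by ring
        _ ≤ x := (le_div_iff₀ hDR).mp hmle
    refine Finset.mem_filter.mpr ⟨Finset.mem_Icc.mpr ⟨Nat.one_le_iff_ne_zero.mpr
      (Nat.mul_pos hD0 hm0).ne', Nat.le_floor hDmx⟩, Dvd.intro m rfl, ?_⟩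
    exact (hSmul m hm0).mpr hmS
  · intro a ha b hb hab
    exact mul_left_cancel₀ hD0.ne' hab
  · intro n hn
    obtain ⟨hnIcc, hDn, hnS⟩ := Finset.mem_filter.mp hn
    obtain ⟨hn1, hn2⟩ := Finset.mem_Icc.mp hnIcc
    obtain ⟨m, rfl⟩ := hDn
    have hm0 : 0 < m := by
      rcases Nat.eq_zero_or_pos m with rfl | h
      · simp at hn1
      · exact h
    have hx1 : (1:ℝ) ≤ x := by
      have : 0 < ⌊x⌋₊ := lt_of_lt_of_le hn1 hn2
      exact Nat.floor_pos.mp this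
    have hnx : ((D * m : ℕ) : ℝ) ≤ x := by
      calc ((D * m : ℕ) : ℝ) ≤ (⌊x⌋₊ : ℝ) := by exact_mod_cast hn2
        _ ≤ x := Nat.floor_le (le_trans zero_le_one hx1)
    have hmfl : m ≤ ⌊x / (D:ℝ)⌋₊ := by
      apply Nat.le_floor
      rw [le_div_iff₀ hDR]
      calc (m:ℝ) * D = ((D * m : ℕ) : ℝ) := by push_cast; ring
        _ ≤ x := hnx
    refine ⟨m, Finset.mem_filter.mpr ⟨Finset.mem_Icc.mpr ⟨hm0, hmfl⟩, ?_⟩, rfl⟩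
    exact (hSmul m hm0).mp hnS
end

section
/- For the sequence of integers free of prime factors < y, the Dirichlet series Σ_{n ≥ 1, (n,a)=1} 1/(n^{s+1} γ_y(n)) equals ζ(s+1) · ∏_{p | a}(1 - 1/p^{s+1}) · ∏_{p ∤ a, p < y}(1 + 1/((p-1)p^{s+1})), where γ_y(n) := ∏_{p | n, p < y}(1 - 1/p). -/
/-- `γ_y(n) = ∏_{p ∣ n, p < y} (1 - 1/p)`. -/
noncomputable def gammaY (y n : ℕ) : ℝ :=
  ∏ p ∈ n.primeFactors.filter (fun p => p < y), (1 - 1 / (p : ℝ))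

/-- Real zeta function `ζ(t) = ∑ n⁻ᵗ` (the `n = 0` term vanishes). -/
noncomputable def zetaR (t : ℝ) : ℝ := ∑' n : ℕ, ((n : ℝ) ^ t)⁻¹

lemma aux_prod_dvd {T : Finset ℕ} (hT : ∀ p ∈ T, p.Prime) {n : ℕ} (hn : n ≠ 0) :
    (∏ p ∈ T, p) ∣ n ↔ T ⊆ n.primeFactors := by
  constructor
  · intro h p hp
    exact Nat.mem_primeFactors.mpr ⟨hT p hp, (Finset.dvd_prod_of_mem _ hp).trans h, hn⟩
  · intro h
    exact Finset.prod_primes_dvd n (fun p hp => (hT p hp).prime)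
      (fun p hp => Nat.dvd_of_mem_primeFactors (h hp))

/-- Euler product identity: for `Re s > 0`,
`∑_{n ≥ 1, (n,a)=1} 1/(n^{s+1} γ_y(n)) =
  ζ(s+1) ∏_{p ∣ a} (1 - p^{-(s+1)}) ∏_{p ∤ a, p < y} (1 + 1/((p-1) p^{s+1}))`. -/
theorem stmt18 (a : ℤ) (ha : a ≠ 0) (y : ℕ) (hy : 2 ≤ y) (s : ℝ) (hs : 0 < s) :
    ∑' n : {n : ℕ // 0 < n ∧ Nat.gcd n a.natAbs = 1},
        ((((n : ℕ) : ℝ) ^ (s + 1) * gammaY y n)⁻¹) =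
      zetaR (s + 1) * (∏ p ∈ a.natAbs.primeFactors, (1 - ((p : ℝ) ^ (s + 1))⁻¹)) *
        ∏ p ∈ (Finset.range y).filter (fun p => p.Prime ∧ ¬ p ∣ a.natAbs),
          (1 + (((p : ℝ) - 1) * (p : ℝ) ^ (s + 1))⁻¹) := by
  classical
  have ha0 : a.natAbs ≠ 0 := Int.natAbs_ne_zero.mpr ha
  set t := s + 1 with hts
  have ht1 : 1 < t := by rw [hts]; linarith
  have ht0 : (0:ℝ) < t := by linarith
  set A := a.natAbs.primeFactors with hA
  set B := (Finset.range y).filter (fun p => p.Prime ∧ ¬ p ∣ a.natAbs) with hB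
  have hdisj : Disjoint A B := by
    refine Finset.disjoint_left.mpr fun p hp hq => ?_
    exact (Finset.mem_filter.mp hq).2.2 (Nat.dvd_of_mem_primeFactors hp)
  set S := A ∪ B with hS
  have hSprime : ∀ p ∈ S, p.Prime := by
    intro p hp
    rcases Finset.mem_union.mp hp with h | h
    · exact Nat.prime_of_mem_primeFactors h
    · exact (Finset.mem_filter.mp h).2.1
  set g : ℕ → ℝ := fun p =>
    if p ∣ a.natAbs then -(((p:ℝ))^t)⁻¹ else (((p:ℝ) - 1) * (p:ℝ)^t)⁻¹ with hg
  set E : Finset ℕ → ℕ → ℝ := fun T n =>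
    if 0 < n ∧ (∏ p ∈ T, p) ∣ n then (((n / ∏ p ∈ T, p : ℕ) : ℝ)^t)⁻¹ else 0 with hEdef
  set F : ℕ → ℝ := fun n =>
    if 0 < n ∧ Nat.gcd n a.natAbs = 1 then (((n:ℝ))^t * gammaY y n)⁻¹ else 0 with hF
  have hppos : ∀ p ∈ S, (0:ℝ) < (p:ℝ)^t := by
    intro p hp
    have h2 := (hSprime p hp).pos
    have : (0:ℝ) < (p:ℝ) := by exact_mod_cast h2
    positivity
  -- key pointwise identity
  have key : ∀ n : ℕ, F n = ∑ T ∈ S.powerset, (∏ p ∈ T, g p) * E T n := by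
    intro n
    rcases Nat.eq_zero_or_pos n with rfl | hn
    · simp [hF, hEdef]
    have hn0 : n ≠ 0 := hn.ne'
    have hsub : (S ∩ n.primeFactors).powerset ⊆ S.powerset :=
      Finset.powerset_mono.mpr Finset.inter_subset_left
    have hrestrict : ∑ T ∈ S.powerset, (∏ p ∈ T, g p) * E T n
        = ∑ T ∈ (S ∩ n.primeFactors).powerset, (∏ p ∈ T, g p) * E T n := by
      refine (Finset.sum_subset hsub ?_).symm
      intro T hT hTn
      have hT' : T ⊆ S := Finset.mem_powerset.mp hT
      have hns : ¬ T ⊆ n.primeFactors := fun hc =>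
        hTn (Finset.mem_powerset.mpr (Finset.subset_inter hT' hc))
      have hdvd : ¬ (∏ p ∈ T, p) ∣ n := by
        rw [aux_prod_dvd (fun p hp => hSprime p (hT' hp)) hn0]; exact hns
      simp [hEdef, hdvd]
    rw [hrestrict]
    have hterm : ∀ T ∈ (S ∩ n.primeFactors).powerset,
        (∏ p ∈ T, g p) * E T n = (((n:ℝ))^t)⁻¹ * ∏ p ∈ T, (g p * (p:ℝ)^t) := by
      intro T hT
      have hT' : T ⊆ S ∩ n.primeFactors := Finset.mem_powerset.mp hT
      have hTS : T ⊆ S := hT'.trans Finset.inter_subset_left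
      have hTn : T ⊆ n.primeFactors := hT'.trans Finset.inter_subset_right
      have hprime : ∀ p ∈ T, p.Prime := fun p hp => hSprime p (hTS hp)
      have hdvd : (∏ p ∈ T, p) ∣ n := (aux_prod_dvd hprime hn0).mpr hTn
      have hdpos : 0 < ∏ p ∈ T, p := Finset.prod_pos fun p hp => (hprime p hp).pos
      have hdR : (0:ℝ) < ((∏ p ∈ T, p : ℕ) : ℝ) := by exact_mod_cast hdpos
      have hcast : ((n / ∏ p ∈ T, p : ℕ) : ℝ) = (n:ℝ) / ((∏ p ∈ T, p : ℕ) : ℝ) :=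
        Nat.cast_div hdvd hdR.ne'
      have hnR : (0:ℝ) < (n:ℝ) := by exact_mod_cast hn
      have hEval : E T n = (((n:ℝ))^t)⁻¹ * ((∏ p ∈ T, p : ℕ) : ℝ)^t := by
        rw [hEdef]
        simp only [hn, hdvd, and_self, if_true]
        rw [hcast, Real.div_rpow hnR.le hdR.le, inv_div, div_eq_mul_inv, mul_comm]
      rw [hEval]
      have hsplit : ((∏ p ∈ T, p : ℕ) : ℝ)^t = ∏ p ∈ T, ((p:ℝ))^t := by
        rw [Nat.cast_prod]
        exact (Real.finset_prod_rpow T _ (fun p _ => by positivity) t).symm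
      rw [hsplit, Finset.prod_mul_distrib]
      ring
    rw [Finset.sum_congr rfl hterm, ← Finset.mul_sum]
    have hexp : ∑ T ∈ (S ∩ n.primeFactors).powerset, ∏ p ∈ T, (g p * (p:ℝ)^t)
        = ∏ p ∈ S ∩ n.primeFactors, (g p * (p:ℝ)^t + 1) := by
      rw [Finset.prod_add]
      exact (Finset.sum_congr rfl fun T hT => by simp).symm
    rw [hexp]
    have hval : ∀ p ∈ S ∩ n.primeFactors, g p * (p:ℝ)^t + 1 =
        (if p ∣ a.natAbs then 0 else (1 - 1/(p:ℝ))⁻¹) := by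
      intro p hp
      have hpS := (Finset.mem_inter.mp hp).1
      have hpp : p.Prime := hSprime p hpS
      have hp0 : ((p:ℝ))^t ≠ 0 := (hppos p hpS).ne'
      have hp2 : (2:ℝ) ≤ (p:ℝ) := by exact_mod_cast hpp.two_le
      have h1 : ((p:ℝ) - 1) ≠ 0 := by linarith
      have hpne : (p:ℝ) ≠ 0 := by linarith
      rw [hg]
      by_cases hpa : p ∣ a.natAbs
      · simp only [hpa, if_true]
        field_simp
        ring
      · simp only [hpa, if_false]
        rw [mul_inv, mul_assoc, inv_mul_cancel₀ hp0, mul_one, one_sub_div hpne, inv_div]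
        field_simp
        ring
    rw [Finset.prod_congr rfl hval]
    by_cases hgcd : Nat.gcd n a.natAbs = 1
    · have hnota : ∀ p ∈ n.primeFactors, ¬ p ∣ a.natAbs := by
        intro p hp hc
        have hdg : p ∣ Nat.gcd n a.natAbs :=
          Nat.dvd_gcd (Nat.dvd_of_mem_primeFactors hp) hc
        rw [hgcd] at hdg
        exact (Nat.prime_of_mem_primeFactors hp).ne_one (Nat.dvd_one.mp hdg)
      have hSint : S ∩ n.primeFactors = n.primeFactors.filter (fun p => p < y) := by
        ext p
        simp only [Finset.mem_inter, Finset.mem_filter, hS, Finset.mem_union, hA, hB,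
          Finset.mem_range]
        constructor
        · rintro ⟨hps, hpn⟩
          refine ⟨hpn, ?_⟩
          rcases hps with h | h
          · exact absurd (Nat.dvd_of_mem_primeFactors h) (hnota p hpn)
          · exact h.1
        · rintro ⟨hpn, hpy⟩
          exact ⟨Or.inr ⟨hpy, Nat.prime_of_mem_primeFactors hpn, hnota p hpn⟩, hpn⟩
      rw [hSint]
      have hprodval : ∏ p ∈ n.primeFactors.filter (fun p => p < y),
          (if p ∣ a.natAbs then (0:ℝ) else (1 - 1/(p:ℝ))⁻¹)
          = (gammaY y n)⁻¹ := by
        rw [gammaY, ← Finset.prod_inv_distrib]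
        refine Finset.prod_congr rfl fun p hp => ?_
        rw [if_neg (hnota p (Finset.mem_filter.mp hp).1)]
      rw [hprodval, hF]
      simp only [hn, hgcd, and_self, if_true]
      rw [mul_inv]
    · -- non-coprime: both sides are zero
      have hgpos : 0 < Nat.gcd n a.natAbs := Nat.gcd_pos_of_pos_left _ hn
      obtain ⟨p, hpp, hpd⟩ := Nat.exists_prime_and_dvd (fun hc => hgcd hc)
      have hpn : p ∣ n := hpd.trans (Nat.gcd_dvd_left _ _)
      have hpa : p ∣ a.natAbs := hpd.trans (Nat.gcd_dvd_right _ _)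
      have hpmem : p ∈ S ∩ n.primeFactors := by
        refine Finset.mem_inter.mpr ⟨?_, Nat.mem_primeFactors.mpr ⟨hpp, hpn, hn0⟩⟩
        exact Finset.mem_union.mpr (Or.inl (Nat.mem_primeFactors.mpr ⟨hpp, hpa, ha0⟩))
      have : ∏ p ∈ S ∩ n.primeFactors,
          (if p ∣ a.natAbs then (0:ℝ) else (1 - 1/(p:ℝ))⁻¹) = 0 :=
        Finset.prod_eq_zero hpmem (by rw [if_pos hpa])
      rw [this, hF]
      simp [hn, hgcd]
  -- summability and value of ∑' E T
  have hbase : Summable (fun n : ℕ => (((n:ℝ))^t)⁻¹) :=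
    Real.summable_nat_rpow_inv.mpr ht1
  have hzetaval : zetaR t = ∑' n : ℕ, (((n:ℝ))^t)⁻¹ := rfl
  have hET : ∀ T ∈ S.powerset, Summable (E T) ∧ ∑' n, E T n = zetaR t := by
    intro T hT
    have hprime : ∀ p ∈ T, p.Prime := fun p hp => hSprime p (Finset.mem_powerset.mp hT hp)
    set d := ∏ p ∈ T, p with hd
    have hdpos : 0 < d := Finset.prod_pos fun p hp => (hprime p hp).pos
    have hinj : Function.Injective (fun m : ℕ => d * m) :=
      fun m₁ m₂ h => Nat.eq_of_mul_eq_mul_left hdpos h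
    have hcomp : ∀ m : ℕ, E T (d * m) = (((m:ℝ))^t)⁻¹ := by
      intro m
      rcases Nat.eq_zero_or_pos m with rfl | hm
      · simp [hEdef, Real.zero_rpow ht0.ne']
      · have h1 : 0 < d * m := Nat.mul_pos hdpos hm
        have h2 : d ∣ d * m := Dvd.intro m rfl
        rw [hEdef]
        simp only [← hd, h1, h2, and_self, if_true]
        rw [Nat.mul_div_cancel_left m hdpos]
    have hzero : ∀ n, n ∉ Set.range (fun m : ℕ => d * m) → E T n = 0 := by
      intro n hnr
      rw [hEdef]
      simp only [← hd]
      rw [if_neg]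
      rintro ⟨-, m, rfl⟩
      exact hnr ⟨m, rfl⟩
    have hsumm : Summable (E T) := by
      refine (Function.Injective.summable_iff hinj hzero).mp ?_
      refine hbase.congr fun m => (hcomp m).symm
    refine ⟨hsumm, ?_⟩
    rw [hzetaval]
    rw [← Function.Injective.tsum_eq hinj (fun n hn => by
      by_contra hc
      exact hn (hzero n hc))]
    exact tsum_congr hcomp
  -- convert subtype sum to F
  have hsubty : ∑' n : {n : ℕ // 0 < n ∧ Nat.gcd n a.natAbs = 1},
      ((((n : ℕ) : ℝ) ^ t * gammaY y n)⁻¹) = ∑' n : ℕ, F n := by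
    refine (tsum_subtype {n : ℕ | 0 < n ∧ Nat.gcd n a.natAbs = 1}
      (fun n => (((n:ℝ))^t * gammaY y n)⁻¹)).trans ?_
    refine tsum_congr fun n => ?_
    rw [hF, Set.indicator_apply]
    rfl
  rw [hsubty]
  have hswap : ∑' n : ℕ, F n = ∑ T ∈ S.powerset, (∏ p ∈ T, g p) * zetaR t := by
    rw [tsum_congr key]
    rw [Summable.tsum_finsetSum (fun T hT => ((hET T hT).1.mul_left _))]
    refine Finset.sum_congr rfl fun T hT => ?_
    rw [tsum_mul_left, (hET T hT).2]
  rw [hswap]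
  have hfold : ∑ T ∈ S.powerset, (∏ p ∈ T, g p) * zetaR t
      = zetaR t * ∏ p ∈ S, (g p + 1) := by
    rw [← Finset.sum_mul, mul_comm]
    congr 1
    rw [Finset.prod_add]
    exact (Finset.sum_congr rfl fun T hT => by simp).symm
  rw [hfold, Finset.prod_union hdisj]
  have hAval : ∏ p ∈ A, (g p + 1) = ∏ p ∈ A, (1 - ((p:ℝ)^t)⁻¹) := by
    refine Finset.prod_congr rfl fun p hp => ?_
    simp only [hg]
    rw [if_pos (Nat.dvd_of_mem_primeFactors hp)]
    ring
  have hBval : ∏ p ∈ B, (g p + 1) = ∏ p ∈ B, (1 + (((p:ℝ) - 1) * (p:ℝ)^t)⁻¹) := by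
    refine Finset.prod_congr rfl fun p hp => ?_
    simp only [hg]
    rw [if_neg (Finset.mem_filter.mp hp).2.2]
    ring
  rw [hAval, hBval, mul_assoc]
end
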